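/- arXiv:1004.4901 — 6 statements merged into one kernel-verified Lean document; each statement's English description precedes it below -/
import Mathlib

section
/- Let k ≥ 2. For j = 1,…,k let e_j be a closed segment in ℝ² with endpoints b_j and c_j, and let a_j and a'_j be points lying on e_j. For j = 1,…,k−1 let w_j ≥ 0 be real weights, and set w_0 = w_k = 0. Let ε > 0 and B ≥ 0, and suppose there is a subset V ⊆ {1,…,k} such that: (i) for every j ∉ V, ‖c_j − b_j‖ ≤ ε·‖a'_j − a'_{j−1}‖ whenever 2 ≤ j ≤ k, and ‖c_j − b_j‖ ≤ ε·‖a'_{j+1} − a'_j‖ whenever 1 ≤ j ≤ k−1; and (ii) Σ_{j∈V} (w_{j−1} + w_j)·‖c_j − b_j‖ ≤ 2εB. Then Σ_{j=1}^{k−1} w_j·‖a_{j+1} − a_j‖ ≤ (1+2ε)·Σ_{j=1}^{k−1} w_j·‖a'_{j+1} − a'_j‖ + 2εB. -/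
lemma seg_norm_sub_le' {E : Type*} [NormedAddCommGroup E] [NormedSpace ℝ E]
    {p q x y : E} (hx : x ∈ segment ℝ p q) (hy : y ∈ segment ℝ p q) :
    ‖x - y‖ ≤ ‖q - p‖ := by
  obtain ⟨u, v, hu, hv, huv, rfl⟩ := hx
  obtain ⟨u', v', hu', hv', huv', rfl⟩ := hy
  have hu1 : u = 1 - v := by linarith
  have hu1' : u' = 1 - v' := by linarith
  subst hu1 hu1'
  have h : (1 - v) • p + v • q - ((1 - v') • p + v' • q) = (v - v') • (q - p) := by
    simp [sub_smul, smul_sub, one_smul]; abel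
  rw [h, norm_smul, Real.norm_eq_abs]
  have : |v - v'| ≤ 1 := abs_le.2 ⟨by linarith, by linarith⟩
  nlinarith [norm_nonneg (q - p)]

lemma sum_shift' (k : ℕ) (hk : 1 ≤ k) (f : ℕ → ℝ) :
    ∑ j ∈ Finset.Icc 2 k, f j = ∑ i ∈ Finset.Icc 1 (k-1), f (i+1) := by
  have h : Finset.Icc 2 k = (Finset.Icc 1 (k-1)).map (addRightEmbedding 1) := by
    rw [Finset.map_add_right_Icc]
    congr 1 <;> omega
  rw [h, Finset.sum_map]
  rfl

/-- Lemma 1: two segments crossing the same ordered sequence of Steiner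
edges `e_j = [b_j, c_j]` at points `a_j` and `a'_j` respectively, with region weights `w_j`,
satisfy `S(l) ≤ (1+2ε)·S(l') + 2εB`. -/
theorem weighted_length_comparison
    (k : ℕ) (hk : 2 ≤ k)
    (b c a a' : ℕ → EuclideanSpace ℝ (Fin 2))
    (ha : ∀ j ∈ Finset.Icc 1 k, a j ∈ segment ℝ (b j) (c j))
    (ha' : ∀ j ∈ Finset.Icc 1 k, a' j ∈ segment ℝ (b j) (c j))
    (w : ℕ → ℝ) (hw : ∀ j ∈ Finset.Icc 1 (k - 1), 0 ≤ w j)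
    (hw0 : w 0 = 0) (hwk : w k = 0)
    (ε B : ℝ) (hε : 0 < ε) (hB : 0 ≤ B)
    (V : Finset ℕ) (hV : V ⊆ Finset.Icc 1 k)
    (hi : ∀ j ∈ Finset.Icc 1 k, j ∉ V →
      (2 ≤ j → ‖c j - b j‖ ≤ ε * ‖a' j - a' (j - 1)‖) ∧
      (j ≤ k - 1 → ‖c j - b j‖ ≤ ε * ‖a' (j + 1) - a' j‖))
    (hii : ∑ j ∈ V, (w (j - 1) + w j) * ‖c j - b j‖ ≤ 2 * ε * B) :
    ∑ j ∈ Finset.Icc 1 (k - 1), w j * ‖a (j + 1) - a j‖ ≤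
      (1 + 2 * ε) * ∑ j ∈ Finset.Icc 1 (k - 1), w j * ‖a' (j + 1) - a' j‖ + 2 * ε * B := by
  -- nonnegativity of weights on all of [1, k] (and shifted)
  have hwnn : ∀ j ∈ Finset.Icc 1 k, 0 ≤ w j := by
    intro j hj
    simp only [Finset.mem_Icc] at hj
    rcases eq_or_lt_of_le hj.2 with h | h
    · rw [h, hwk]
    · exact hw j (Finset.mem_Icc.2 ⟨hj.1, by omega⟩)
  have hwnn' : ∀ j ∈ Finset.Icc 1 k, 0 ≤ w (j - 1) := by
    intro j hj
    simp only [Finset.mem_Icc] at hj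
    rcases Nat.eq_or_lt_of_le hj.1 with h | h
    · rw [← h]; simp [hw0]
    · exact hw (j - 1) (Finset.mem_Icc.2 ⟨by omega, by omega⟩)
  set S' := ∑ j ∈ Finset.Icc 1 (k - 1), w j * ‖a' (j + 1) - a' j‖ with hS'
  -- Step 1: termwise triangle inequality
  have step1 : ∑ j ∈ Finset.Icc 1 (k - 1), w j * ‖a (j + 1) - a j‖ ≤
      S' + ∑ j ∈ Finset.Icc 1 (k - 1),
        (w j * ‖c j - b j‖ + w j * ‖c (j + 1) - b (j + 1)‖) := by
    rw [hS', ← Finset.sum_add_distrib]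
    apply Finset.sum_le_sum
    intro j hj
    simp only [Finset.mem_Icc] at hj
    have hjk : j ∈ Finset.Icc 1 k := Finset.mem_Icc.2 ⟨hj.1, by omega⟩
    have hjk1 : j + 1 ∈ Finset.Icc 1 k := Finset.mem_Icc.2 ⟨by omega, by omega⟩
    have hwj : 0 ≤ w j := hwnn j hjk
    have htri : ‖a (j + 1) - a j‖ ≤
        ‖a (j + 1) - a' (j + 1)‖ + ‖a' (j + 1) - a' j‖ + ‖a' j - a j‖ := by
      have := dist_triangle4 (a (j + 1)) (a' (j + 1)) (a' j) (a j)
      simpa [dist_eq_norm] using this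
    have h1 : ‖a (j + 1) - a' (j + 1)‖ ≤ ‖c (j + 1) - b (j + 1)‖ :=
      seg_norm_sub_le' (ha _ hjk1) (ha' _ hjk1)
    have h2 : ‖a' j - a j‖ ≤ ‖c j - b j‖ := seg_norm_sub_le' (ha' _ hjk) (ha _ hjk)
    nlinarith [norm_nonneg (a' (j + 1) - a' j)]
  -- Step 2: regroup the edge-length sum
  have drop_top : ∀ f : ℕ → ℝ, f k = 0 →
      ∑ j ∈ Finset.Icc 1 k, f j = ∑ j ∈ Finset.Icc 1 (k - 1), f j := by
    intro f hf
    symm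
    apply Finset.sum_subset
    · intro x hx
      simp only [Finset.mem_Icc] at hx ⊢
      omega
    · intro x hx hx'
      simp only [Finset.mem_Icc] at hx hx'
      have : x = k := by omega
      rw [this, hf]
  have drop_bot : ∀ f : ℕ → ℝ, f 1 = 0 →
      ∑ j ∈ Finset.Icc 1 k, f j = ∑ j ∈ Finset.Icc 2 k, f j := by
    intro f hf
    symm
    apply Finset.sum_subset
    · intro x hx
      simp only [Finset.mem_Icc] at hx ⊢
      omega
    · intro x hx hx'
      simp only [Finset.mem_Icc] at hx hx'
      have : x = 1 := by omega
      rw [this, hf]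
  have step2 : ∑ j ∈ Finset.Icc 1 (k - 1),
        (w j * ‖c j - b j‖ + w j * ‖c (j + 1) - b (j + 1)‖) =
      ∑ j ∈ Finset.Icc 1 k, (w (j - 1) + w j) * ‖c j - b j‖ := by
    have e1 : ∑ j ∈ Finset.Icc 1 k, w j * ‖c j - b j‖ =
        ∑ j ∈ Finset.Icc 1 (k - 1), w j * ‖c j - b j‖ :=
      drop_top _ (by rw [hwk]; ring)
    have e2 : ∑ j ∈ Finset.Icc 1 k, w (j - 1) * ‖c j - b j‖ =
        ∑ j ∈ Finset.Icc 1 (k - 1), w j * ‖c (j + 1) - b (j + 1)‖ := by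
      rw [drop_bot _ (by norm_num [hw0]),
        sum_shift' k (by omega) (fun j => w (j - 1) * ‖c j - b j‖)]
      simp
    calc ∑ j ∈ Finset.Icc 1 (k - 1),
          (w j * ‖c j - b j‖ + w j * ‖c (j + 1) - b (j + 1)‖)
        = ∑ j ∈ Finset.Icc 1 (k - 1), w j * ‖c j - b j‖ +
          ∑ j ∈ Finset.Icc 1 (k - 1), w j * ‖c (j + 1) - b (j + 1)‖ :=
          Finset.sum_add_distrib
      _ = ∑ j ∈ Finset.Icc 1 k, w j * ‖c j - b j‖ +
          ∑ j ∈ Finset.Icc 1 k, w (j - 1) * ‖c j - b j‖ := by rw [e1, e2]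
      _ = ∑ j ∈ Finset.Icc 1 k, (w (j - 1) + w j) * ‖c j - b j‖ := by
          rw [← Finset.sum_add_distrib]
          apply Finset.sum_congr rfl
          intro j _
          ring
  -- Step 3: bound the sum over the complement of V
  have step3 : ∑ j ∈ Finset.Icc 1 k \ V, (w (j - 1) + w j) * ‖c j - b j‖ ≤
      2 * ε * S' := by
    have hterm : ∀ j ∈ Finset.Icc 1 k \ V, (w (j - 1) + w j) * ‖c j - b j‖ ≤
        ε * (w (j - 1) * ‖a' j - a' (j - 1)‖ + w j * ‖a' (j + 1) - a' j‖) := by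
      intro j hj
      rw [Finset.mem_sdiff] at hj
      obtain ⟨hjk, hjV⟩ := hj
      have hik := hi j hjk hjV
      have hjm := Finset.mem_Icc.1 hjk
      have hA : w (j - 1) * ‖c j - b j‖ ≤ ε * (w (j - 1) * ‖a' j - a' (j - 1)‖) := by
        rcases Nat.lt_or_ge j 2 with h2 | h2
        · have : j = 1 := by omega
          simp [this, hw0]
        · have := mul_le_mul_of_nonneg_left (hik.1 h2) (hwnn' j hjk)
          nlinarith
      have hBt : w j * ‖c j - b j‖ ≤ ε * (w j * ‖a' (j + 1) - a' j‖) := by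
        rcases Nat.lt_or_ge (k - 1) j with h2 | h2
        · have : j = k := by omega
          simp [this, hwk]
        · have := mul_le_mul_of_nonneg_left (hik.2 h2) (hwnn j hjk)
          nlinarith
      nlinarith
    have h1 : ∑ j ∈ Finset.Icc 1 k \ V, (w (j - 1) + w j) * ‖c j - b j‖ ≤
        ∑ j ∈ Finset.Icc 1 k \ V,
          ε * (w (j - 1) * ‖a' j - a' (j - 1)‖ + w j * ‖a' (j + 1) - a' j‖) :=
      Finset.sum_le_sum hterm
    have h2 : ∑ j ∈ Finset.Icc 1 k \ V,
          ε * (w (j - 1) * ‖a' j - a' (j - 1)‖ + w j * ‖a' (j + 1) - a' j‖) ≤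
        ∑ j ∈ Finset.Icc 1 k,
          ε * (w (j - 1) * ‖a' j - a' (j - 1)‖ + w j * ‖a' (j + 1) - a' j‖) := by
      apply Finset.sum_le_sum_of_subset_of_nonneg (Finset.sdiff_subset)
      intro j hj _
      have := hwnn j hj
      have := hwnn' j hj
      positivity
    have h3 : ∑ j ∈ Finset.Icc 1 k,
          ε * (w (j - 1) * ‖a' j - a' (j - 1)‖ + w j * ‖a' (j + 1) - a' j‖) =
        2 * ε * S' := by
      have eA : ∑ j ∈ Finset.Icc 1 k, w (j - 1) * ‖a' j - a' (j - 1)‖ = S' := by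
        rw [drop_bot _ (by norm_num [hw0]),
          sum_shift' k (by omega) (fun j => w (j - 1) * ‖a' j - a' (j - 1)‖)]
        simp [hS']
      have eB : ∑ j ∈ Finset.Icc 1 k, w j * ‖a' (j + 1) - a' j‖ = S' :=
        drop_top _ (by rw [hwk]; ring)
      calc ∑ j ∈ Finset.Icc 1 k,
            ε * (w (j - 1) * ‖a' j - a' (j - 1)‖ + w j * ‖a' (j + 1) - a' j‖)
          = ε * (∑ j ∈ Finset.Icc 1 k, w (j - 1) * ‖a' j - a' (j - 1)‖ +
              ∑ j ∈ Finset.Icc 1 k, w j * ‖a' (j + 1) - a' j‖) := by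
            rw [← Finset.sum_add_distrib, Finset.mul_sum]
        _ = 2 * ε * S' := by rw [eA, eB]; ring
    linarith
  -- Step 4: split over V and its complement
  have split : ∑ j ∈ Finset.Icc 1 k, (w (j - 1) + w j) * ‖c j - b j‖ =
      ∑ j ∈ Finset.Icc 1 k \ V, (w (j - 1) + w j) * ‖c j - b j‖ +
      ∑ j ∈ V, (w (j - 1) + w j) * ‖c j - b j‖ :=
    (Finset.sum_sdiff hV).symm
  linarith [step1, step2 ▸ step1]
end

section
/- Let v, p₀, p₁, q₀, q₁ ∈ ℝ², and define P(s) = p₀ + s·(p₁ − p₀) and Q(t) = q₀ + t·(q₁ − q₀) for s, t ∈ ℝ. Set c₀ = det(p₁ − p₀, q₁ − q₀), c₁ = det(p₁ − p₀, q₀ − v), c₂ = det(p₀ − v, q₁ − q₀), and c₃ = det(p₀ − v, q₀ − v). Then for all s, t ∈ ℝ, the three points v, P(s), Q(t) are collinear if and only if c₀·s·t + c₁·s + c₂·t + c₃ = 0. -/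
/-- The planar determinant `det((x₁,y₁),(x₂,y₂)) = x₁·y₂ − x₂·y₁`. -/
noncomputable def det2 (u w : ℝ × ℝ) : ℝ := u.1 * w.2 - w.1 * u.2

lemma det2_eq_zero_iff (u w : ℝ × ℝ) :
    det2 u w = 0 ↔ ∃ x : ℝ × ℝ, (∃ r : ℝ, u = r • x) ∧ ∃ r : ℝ, w = r • x := by
  constructor
  · intro h
    rcases eq_or_ne u 0 with hu | hu
    · exact ⟨w, ⟨0, by simp [hu]⟩, 1, by simp⟩
    · refine ⟨u, ⟨1, by simp⟩, ?_⟩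
      rcases eq_or_ne u.1 0 with h1 | h1
      · have h2 : u.2 ≠ 0 := by
          intro h2; exact hu (Prod.ext h1 h2)
        refine ⟨w.2 / u.2, ?_⟩
        have hw1 : w.1 = 0 := by
          have := h; simp [det2, h1] at this
          tauto
        ext <;> simp [hw1, h1] <;> field_simp
      · refine ⟨w.1 / u.1, ?_⟩
        have hd : u.1 * w.2 = w.1 * u.2 := by
          simp [det2] at h; linarith
        ext
        · simp; field_simp
        · simp; field_simp; linarith [hd]
  · rintro ⟨x, ⟨a, rfl⟩, b, rfl⟩
    simp [det2]; ring

lemma collinear_iff_det2 (a b c : ℝ × ℝ) :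
    Collinear ℝ ({a, b, c} : Set (ℝ × ℝ)) ↔ det2 (b - a) (c - a) = 0 := by
  rw [collinear_iff_of_mem (Set.mem_insert a _), det2_eq_zero_iff]
  constructor
  · rintro ⟨x, hx⟩
    obtain ⟨r₁, h₁⟩ := hx b (by simp)
    obtain ⟨r₂, h₂⟩ := hx c (by simp)
    exact ⟨x, ⟨r₁, by simp [h₁]⟩, ⟨r₂, by simp [h₂]⟩⟩
  · rintro ⟨x, ⟨r₁, h₁⟩, r₂, h₂⟩
    refine ⟨x, ?_⟩
    intro p hp
    rcases hp with rfl | rfl | rfl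
    · exact ⟨0, by simp⟩
    · exact ⟨r₁, by simp [← h₁]⟩
    · exact ⟨r₂, by simp [← h₂]⟩

/-- Lemma 4: the leashes through a fixed point `v` correspond exactly to the
dual curve `c₀·st + c₁·s + c₂·t + c₃ = 0` in the parameter space. -/
theorem dual_curve_of_point
    (v p₀ p₁ q₀ q₁ : ℝ × ℝ) :
    ∀ s t : ℝ,
      Collinear ℝ ({v, p₀ + s • (p₁ - p₀), q₀ + t • (q₁ - q₀)} : Set (ℝ × ℝ)) ↔
      det2 (p₁ - p₀) (q₁ - q₀) * s * t + det2 (p₁ - p₀) (q₀ - v) * s +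
        det2 (p₀ - v) (q₁ - q₀) * t + det2 (p₀ - v) (q₀ - v) = 0 := by
  intro s t
  have key : det2 (p₀ + s • (p₁ - p₀) - v) (q₀ + t • (q₁ - q₀) - v) =
      det2 (p₁ - p₀) (q₁ - q₀) * s * t + det2 (p₁ - p₀) (q₀ - v) * s +
        det2 (p₀ - v) (q₁ - q₀) * t + det2 (p₀ - v) (q₀ - v) := by
    simp only [det2, Prod.fst_add, Prod.snd_add, Prod.fst_sub, Prod.snd_sub,
      Prod.smul_fst, Prod.smul_snd, smul_eq_mul]
    ring
  rw [collinear_iff_det2, key]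
end

section
/- Let f, g : [0,1] → ℝ² be continuous maps and let b, c ∈ ℝ². Suppose that for every r ∈ [0,1]: b does not lie on the closed segment [f(r), g(r)], c does not lie on [f(r), g(r)], f(r) does not lie on the closed segment [b, c], and g(r) does not lie on [b, c]. Then the set {r ∈ [0,1] : [f(r), g(r)] ∩ [b, c] ≠ ∅} is either all of [0,1] or empty. -/
open unitInterval

/-- Cross product of two planar vectors. -/
def cr (u v : ℝ × ℝ) : ℝ := u.1 * v.2 - u.2 * v.1

lemma cr_comb (u : ℝ × ℝ) (a s : ℝ) (p q w : ℝ × ℝ) (h : a + s = 1) :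
    cr u (a • p + s • q - w) = a * cr u (p - w) + s * cr u (q - w) := by
  simp only [cr, Prod.fst_add, Prod.snd_add, Prod.smul_fst, Prod.smul_snd, Prod.fst_sub,
    Prod.snd_sub, smul_eq_mul]
  linear_combination (u.1 * w.2 - u.2 * w.1) * h

lemma cr_self (u : ℝ × ℝ) : cr u u = 0 := by simp [cr]; ring

lemma cr_zero (u : ℝ × ℝ) : cr u 0 = 0 := by simp [cr]

lemma seg_compact (p q : ℝ × ℝ) : IsCompact (segment ℝ p q) := by
  rw [segment_eq_image]
  exact isCompact_Icc.image (by fun_prop)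

lemma mem_seg_param {b c : ℝ × ℝ} {u : ℝ} (h0 : 0 ≤ u) (h1 : u ≤ 1) :
    b + u • (c - b) ∈ segment ℝ b c :=
  ⟨1 - u, u, by linarith, h0, by ring, by module⟩

lemma exists_param {b c p : ℝ × ℝ} (hbc : c - b ≠ 0) (h0 : cr (c - b) (p - b) = 0) :
    ∃ u : ℝ, p = b + u • (c - b) := by
  simp only [cr, Prod.fst_sub, Prod.snd_sub] at h0
  have hco : ∀ u : ℝ, b + u • (c - b) = (b.1 + u * (c.1 - b.1), b.2 + u * (c.2 - b.2)) := by
    intro u; ext <;> simp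
  rcases eq_or_ne (c.1 - b.1) 0 with h1 | h1
  · have h2 : c.2 - b.2 ≠ 0 := by
      intro h2; apply hbc
      have e1 : c.1 = b.1 := by linarith
      have e2 : c.2 = b.2 := by linarith
      ext <;> simp [e1, e2]
    have hp1 : p.1 = b.1 := by
      rw [h1] at h0
      have h3 : (c.2 - b.2) * (p.1 - b.1) = 0 := by linarith
      rcases mul_eq_zero.mp h3 with h' | h'
      · exact absurd h' h2
      · linarith
    refine ⟨(p.2 - b.2) / (c.2 - b.2), ?_⟩
    rw [hco]
    refine Prod.ext ?_ ?_
    · rw [h1, mul_zero, add_zero]; exact hp1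
    · field_simp; ring
  · refine ⟨(p.1 - b.1) / (c.1 - b.1), ?_⟩
    rw [hco]
    refine Prod.ext ?_ ?_
    · field_simp; ring
    · field_simp
      linear_combination h0

lemma sign_of_comb {a s u v : ℝ} (ha : 0 ≤ a) (hs : 0 ≤ s) (hsum : a + s = 1)
    (h : a * u + s * v = 0) (hu : u ≠ 0) (hv : v ≠ 0) : u * v < 0 := by
  rcases hu.lt_or_gt with hu' | hu' <;> rcases hv.lt_or_gt with hv' | hv'
  · exfalso
    have h1 : a * u ≤ 0 := mul_nonpos_of_nonneg_of_nonpos ha hu'.le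
    have h2 : s * v ≤ 0 := mul_nonpos_of_nonneg_of_nonpos hs hv'.le
    have h3 : a * u = 0 := by linarith
    have h4 : s * v = 0 := by linarith
    rcases mul_eq_zero.mp h3 with h' | h'
    · rcases mul_eq_zero.mp h4 with h'' | h''
      · linarith
      · exact hv h''
    · exact hu h'
  · exact mul_neg_of_neg_of_pos hu' hv'
  · exact mul_neg_of_pos_of_neg hu' hv'
  · exfalso
    have h1 : 0 ≤ a * u := mul_nonneg ha hu'.le
    have h2 : 0 ≤ s * v := mul_nonneg hs hv'.le
    have h3 : a * u = 0 := by linarith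
    have h4 : s * v = 0 := by linarith
    rcases mul_eq_zero.mp h3 with h' | h'
    · rcases mul_eq_zero.mp h4 with h'' | h''
      · linarith
      · exact hv.lt_or_gt.elim (fun hh => by linarith) (fun hh => by linarith)
    · exact hu.lt_or_gt.elim (fun hh => by linarith) (fun hh => by linarith)

/-- Collinear case is impossible under the non-degeneracy hypotheses. -/
lemma collinear_false (b c p q x : ℝ × ℝ)
    (hp0 : cr (c - b) (p - b) = 0) (hq0 : cr (c - b) (q - b) = 0)
    (hxpq : x ∈ segment ℝ p q) (hxbc : x ∈ segment ℝ b c)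
    (hp : p ∉ segment ℝ b c) (hq : q ∉ segment ℝ b c) (hb : b ∉ segment ℝ p q) : False := by
  have hbc : b ≠ c := by
    rintro rfl
    rw [segment_same] at hxbc
    exact hb (hxbc ▸ hxpq)
  have hv : c - b ≠ 0 := sub_ne_zero.mpr (Ne.symm hbc)
  obtain ⟨up, hpe⟩ := exists_param hv hp0
  obtain ⟨uq, hqe⟩ := exists_param hv hq0
  obtain ⟨a, s, ha, hs, hsum, hxe⟩ := hxpq
  obtain ⟨a', t, ha', ht, hsum', hxe'⟩ := hxbc
  have ha2 : a = 1 - s := by linarith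
  have ha2' : a' = 1 - t := by linarith
  -- x = b + t • (c-b) and x = b + ((1-s)up + s uq) • (c-b)
  have e1 : x = b + t • (c - b) := by rw [← hxe', ha2']; module
  have e2 : x = b + ((1 - s) * up + s * uq) • (c - b) := by
    rw [← hxe, ha2, hpe, hqe]; module
  have hteq : t = (1 - s) * up + s * uq := by
    have h3 : t • (c - b) = ((1 - s) * up + s * uq) • (c - b) := by
      have := e1.symm.trans e2
      exact add_left_cancel this
    exact smul_left_injective ℝ hv h3
  have hup : ¬ (0 ≤ up ∧ up ≤ 1) := fun ⟨h1, h2⟩ => hp (hpe ▸ mem_seg_param h1 h2)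
  have huq : ¬ (0 ≤ uq ∧ uq ≤ 1) := fun ⟨h1, h2⟩ => hq (hqe ▸ mem_seg_param h1 h2)
  push_neg at hup huq
  have hs1 : s ≤ 1 := by linarith
  -- case analysis on positions of up, uq
  rcases lt_or_ge up 0 with hu1 | hu1 <;> rcases lt_or_ge uq 0 with hu2 | hu2
  · -- both negative : t < 0
    nlinarith [mul_nonneg hs (neg_nonneg.mpr hu2.le),
      mul_nonneg (by linarith : (0:ℝ) ≤ 1 - s) (neg_nonneg.mpr hu1.le)]
  · -- up < 0 ≤ uq, so uq > 1 ; b lies on segment p q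
    have huq1 : 1 < uq := huq hu2
    have hd : 0 < uq - up := by linarith
    set s0 : ℝ := -up / (uq - up) with hs0def
    have hs00 : 0 ≤ s0 := div_nonneg (by linarith) hd.le
    have hs01 : s0 ≤ 1 := (div_le_one hd).mpr (by linarith)
    apply hb
    refine ⟨1 - s0, s0, by linarith, hs00, by ring, ?_⟩
    have hcoef : (1 - s0) * up + s0 * uq = 0 := by
      rw [hs0def]; field_simp; ring
    have : (1 - s0) • p + s0 • q = b + ((1 - s0) * up + s0 * uq) • (c - b) := by
      rw [hpe, hqe]; module
    rw [this, hcoef]; simp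
  · -- uq < 0 ≤ up, so up > 1 ; b lies on segment p q
    have hup1 : 1 < up := hup hu1
    have hd : 0 < up - uq := by linarith
    set s0 : ℝ := up / (up - uq) with hs0def
    have hs00 : 0 ≤ s0 := div_nonneg (by linarith) hd.le
    have hs01 : s0 ≤ 1 := (div_le_one hd).mpr (by linarith)
    apply hb
    refine ⟨1 - s0, s0, by linarith, hs00, by ring, ?_⟩
    have hcoef : (1 - s0) * up + s0 * uq = 0 := by
      rw [hs0def]; field_simp; ring
    have : (1 - s0) • p + s0 • q = b + ((1 - s0) * up + s0 * uq) • (c - b) := by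
      rw [hpe, hqe]; module
    rw [this, hcoef]; simp
  · -- both ≥ 0, hence both > 1 : t > 1
    have h1 : 1 < up := hup hu1
    have h2 : 1 < uq := huq hu2
    nlinarith [mul_nonneg hs (by linarith : (0:ℝ) ≤ uq - 1),
      mul_nonneg (by linarith : (0:ℝ) ≤ 1 - s) (by linarith : (0:ℝ) ≤ up - 1)]

/-- If segments intersect and no endpoint of either lies on the other,
then both orientation products are strictly negative. -/
lemma signs_of_inter (b c p q : ℝ × ℝ)
    (hb : b ∉ segment ℝ p q) (hc : c ∉ segment ℝ p q)
    (hp : p ∉ segment ℝ b c) (hq : q ∉ segment ℝ b c)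
    (hne : (segment ℝ p q ∩ segment ℝ b c).Nonempty) :
    cr (c - b) (p - b) * cr (c - b) (q - b) < 0 ∧
      cr (q - p) (b - p) * cr (q - p) (c - p) < 0 := by
  obtain ⟨x, hxpq, hxbc⟩ := hne
  obtain ⟨a, s, ha, hs, hsum, hxe⟩ := hxpq
  obtain ⟨a', t, ha', ht, hsum', hxe'⟩ := hxbc
  -- affine combinations of the orientation functions vanish at x
  have e1 : a * cr (c - b) (p - b) + s * cr (c - b) (q - b) = 0 := by
    rw [← cr_comb (c - b) a s p q b hsum, hxe, ← hxe',
      cr_comb (c - b) a' t b c b hsum']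
    simp [cr_self, cr_zero]
  have e2 : a' * cr (q - p) (b - p) + t * cr (q - p) (c - p) = 0 := by
    rw [← cr_comb (q - p) a' t b c p hsum', hxe', ← hxe,
      cr_comb (q - p) a s p q p hsum]
    simp [cr_self, cr_zero]
  have hxpq' : x ∈ segment ℝ p q := ⟨a, s, ha, hs, hsum, hxe⟩
  have hxbc' : x ∈ segment ℝ b c := ⟨a', t, ha', ht, hsum', hxe'⟩
  have hσp : cr (c - b) (p - b) ≠ 0 := by
    intro h0
    by_cases h0q : cr (c - b) (q - b) = 0
    · exact collinear_false b c p q x h0 h0q hxpq' hxbc' hp hq hb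
    · have ha0 : a * cr (c - b) (p - b) = 0 := by rw [h0]; ring
      have hsz : s = 0 := by
        have hmul : s * cr (c - b) (q - b) = 0 := by linarith
        rcases mul_eq_zero.mp hmul with h' | h'
        · exact h'
        · exact absurd h' h0q
      apply hp
      have hxp : x = p := by
        rw [← hxe, hsz, show a = 1 by linarith]
        try module
      exact hxp ▸ hxbc'
  have hσq : cr (c - b) (q - b) ≠ 0 := by
    intro h0
    by_cases h0p : cr (c - b) (p - b) = 0
    · exact collinear_false b c p q x h0p h0 hxpq' hxbc' hp hq hb
    · have hs0' : s * cr (c - b) (q - b) = 0 := by rw [h0]; ring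
      have haz : a = 0 := by
        have hmul : a * cr (c - b) (p - b) = 0 := by linarith
        rcases mul_eq_zero.mp hmul with h' | h'
        · exact h'
        · exact absurd h' h0p
      apply hq
      have hxq : x = q := by
        rw [← hxe, haz, show s = 1 by linarith]
        try module
      exact hxq ▸ hxbc'
  have hτb : cr (q - p) (b - p) ≠ 0 := by
    intro h0
    by_cases h0c : cr (q - p) (c - p) = 0
    · exact collinear_false p q b c x h0 h0c hxbc' hxpq' hb hc hp
    · have ha0 : a' * cr (q - p) (b - p) = 0 := by rw [h0]; ring
      have htz : t = 0 := by
        have hmul : t * cr (q - p) (c - p) = 0 := by linarith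
        rcases mul_eq_zero.mp hmul with h' | h'
        · exact h'
        · exact absurd h' h0c
      apply hb
      have hxb : x = b := by
        rw [← hxe', htz, show a' = 1 by linarith]
        try module
      exact hxb ▸ hxpq'
  have hτc : cr (q - p) (c - p) ≠ 0 := by
    intro h0
    by_cases h0b : cr (q - p) (b - p) = 0
    · exact collinear_false p q b c x h0b h0 hxbc' hxpq' hb hc hp
    · have ht0' : t * cr (q - p) (c - p) = 0 := by rw [h0]; ring
      have haz : a' = 0 := by
        have hmul : a' * cr (q - p) (b - p) = 0 := by linarith
        rcases mul_eq_zero.mp hmul with h' | h'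
        · exact h'
        · exact absurd h' h0b
      apply hc
      have hxc : x = c := by
        rw [← hxe', haz, show t = 1 by linarith]
        try module
      exact hxc ▸ hxpq'
  exact ⟨sign_of_comb ha hs hsum e1 hσp hσq, sign_of_comb ha' ht hsum' e2 hτb hτc⟩

/-- Conversely, if both orientation products are strictly negative then the segments meet. -/
lemma inter_of_signs (b c p q : ℝ × ℝ)
    (h1 : cr (c - b) (p - b) * cr (c - b) (q - b) < 0)
    (h2 : cr (q - p) (b - p) * cr (q - p) (c - p) < 0) :
    (segment ℝ p q ∩ segment ℝ b c).Nonempty := by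
  set σp := cr (c - b) (p - b) with hσp
  set σq := cr (c - b) (q - b) with hσq
  set τb := cr (q - p) (b - p) with hτb
  set τc := cr (q - p) (c - p) with hτc
  set D : ℝ := σq - σp with hD
  have hτ : τc = τb - D := by
    simp only [hτb, hτc, hD, hσp, hσq, cr, Prod.fst_sub, Prod.snd_sub]; ring
  have hDne : D ≠ 0 := by
    intro h0
    have : σq = σp := by linarith
    rw [this] at h1
    nlinarith [mul_self_nonneg σp]
  set s : ℝ := -σp / D with hs
  set t : ℝ := τb / D with htdef
  have hσpne : σp ≠ 0 := by intro h0; rw [h0] at h1; simp at h1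
  have hτbne : τb ≠ 0 := by intro h0; rw [h0] at h2; simp at h2
  have hs01 : 0 < s ∧ s < 1 := by
    rcases hσpne.lt_or_gt with hneg | hpos
    · have hσqpos : 0 < σq := by nlinarith
      have hDpos : 0 < D := by rw [hD]; linarith
      constructor
      · exact div_pos (by linarith) hDpos
      · rw [hs, div_lt_one hDpos]; linarith
    · have hσqneg : σq < 0 := by nlinarith
      have hDneg : D < 0 := by rw [hD]; linarith
      have hrw : s = σp / (-D) := by rw [hs, div_neg, neg_div]
      constructor
      · rw [hrw]; exact div_pos hpos (by linarith)
      · rw [hrw, div_lt_one (by linarith : (0:ℝ) < -D)]; linarith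
  have ht01 : 0 < t ∧ t < 1 := by
    rcases hτbne.lt_or_gt with hneg | hpos
    · have hτcpos : 0 < τc := by nlinarith
      have hDneg : D < 0 := by rw [hτ] at hτcpos; linarith
      have hrw : t = (-τb) / (-D) := by rw [htdef, neg_div_neg_eq]
      constructor
      · rw [hrw]; exact div_pos (by linarith) (by linarith)
      · rw [hrw, div_lt_one (by linarith : (0:ℝ) < -D)]
        rw [hτ] at hτcpos; linarith
    · have hτcneg : τc < 0 := by nlinarith
      have hDpos : 0 < D := by rw [hτ] at hτcneg; linarith
      constructor
      · exact div_pos hpos hDpos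
      · rw [htdef, div_lt_one hDpos]; rw [hτ] at hτcneg; linarith
  refine ⟨(1 - s) • p + s • q, ⟨1 - s, s, by linarith [hs01.2], hs01.1.le, by ring, rfl⟩,
    ⟨1 - t, t, by linarith [ht01.2], ht01.1.le, by ring, ?_⟩⟩
  have hσpe : σp = (c.1 - b.1) * (p.2 - b.2) - (c.2 - b.2) * (p.1 - b.1) := rfl
  have hσqe : σq = (c.1 - b.1) * (q.2 - b.2) - (c.2 - b.2) * (q.1 - b.1) := rfl
  have hτbe : τb = (q.1 - p.1) * (b.2 - p.2) - (q.2 - p.2) * (b.1 - p.1) := rfl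
  ext
  · show (1 - t) * b.1 + t * c.1 = (1 - s) * p.1 + s * q.1
    rw [htdef, hs, hD, hσpe, hσqe, hτbe]
    have hDne' : (c.1 - b.1) * (q.2 - b.2) - (c.2 - b.2) * (q.1 - b.1) -
        ((c.1 - b.1) * (p.2 - b.2) - (c.2 - b.2) * (p.1 - b.1)) ≠ 0 := by
      rw [← hσpe, ← hσqe, ← hD]; exact hDne
    field_simp
    ring
  · show (1 - t) * b.2 + t * c.2 = (1 - s) * p.2 + s * q.2
    rw [htdef, hs, hD, hσpe, hσqe, hτbe]
    have hDne' : (c.1 - b.1) * (q.2 - b.2) - (c.2 - b.2) * (q.1 - b.1) -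
        ((c.1 - b.1) * (p.2 - b.2) - (c.2 - b.2) * (p.1 - b.1)) ≠ 0 := by
      rw [← hσpe, ← hσqe, ← hD]; exact hDne
    field_simp
    ring

/-- geometric core of Lemma 6: along a continuous family of segments
`[f(r), g(r)]`, if no segment of the family passes through an endpoint of a fixed segment
`[b, c]` and no endpoint `f(r)`, `g(r)` ever lies on `[b, c]`, then either every segment
of the family meets `[b, c]` or none does. -/
theorem segment_family_intersection_dichotomy
    (f g : I → ℝ × ℝ) (hf : Continuous f) (hg : Continuous g)
    (b c : ℝ × ℝ)
    (h : ∀ r : I, b ∉ segment ℝ (f r) (g r) ∧ c ∉ segment ℝ (f r) (g r) ∧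
      f r ∉ segment ℝ b c ∧ g r ∉ segment ℝ b c) :
    {r : I | (segment ℝ (f r) (g r) ∩ segment ℝ b c).Nonempty} = Set.univ ∨
    {r : I | (segment ℝ (f r) (g r) ∩ segment ℝ b c).Nonempty} = ∅ := by
  set S := {r : I | (segment ℝ (f r) (g r) ∩ segment ℝ b c).Nonempty} with hS
  -- characterization via strict sign conditions
  have hchar : S = {r : I | cr (c - b) (f r - b) * cr (c - b) (g r - b) < 0 ∧
      cr (g r - f r) (b - f r) * cr (g r - f r) (c - f r) < 0} := by
    ext r
    constructor
    · intro hr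
      exact signs_of_inter b c (f r) (g r) (h r).1 (h r).2.1 (h r).2.2.1 (h r).2.2.2 hr
    · intro hr
      exact inter_of_signs b c (f r) (g r) hr.1 hr.2
  have hopen : IsOpen S := by
    rw [hchar]
    have hc1 : Continuous fun r : I => cr (c - b) (f r - b) * cr (c - b) (g r - b) := by
      simp only [cr, Prod.fst_sub, Prod.snd_sub]
      fun_prop
    have hc2 : Continuous fun r : I =>
        cr (g r - f r) (b - f r) * cr (g r - f r) (c - f r) := by
      simp only [cr, Prod.fst_sub, Prod.snd_sub]
      fun_prop
    exact (isOpen_lt hc1 continuous_const).inter (isOpen_lt hc2 continuous_const)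
  have hclosed : IsClosed S := by
    rw [← isOpen_compl_iff, isOpen_iff_mem_nhds]
    intro r hr
    -- segments are disjoint at r; use disjoint thickenings
    have hdisj : Disjoint (segment ℝ (f r) (g r)) (segment ℝ b c) := by
      rw [Set.disjoint_iff_inter_eq_empty]
      by_contra hne
      exact hr (Set.nonempty_iff_ne_empty.mpr hne)
    obtain ⟨δ, hδ, hthick⟩ := hdisj.exists_thickenings
      (seg_compact _ _) (seg_compact _ _).isClosed
    have h1 : ∀ᶠ r' in nhds r, dist (f r') (f r) < δ :=
      Metric.tendsto_nhds.mp (hf.tendsto r) δ hδ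
    have h2 : ∀ᶠ r' in nhds r, dist (g r') (g r) < δ :=
      Metric.tendsto_nhds.mp (hg.tendsto r) δ hδ
    filter_upwards [h1, h2] with r' hd1 hd2
    intro hmem
    obtain ⟨x, hx1, hx2⟩ := hmem
    refine Set.disjoint_left.mp hthick ?_ (Metric.self_subset_thickening hδ _ hx2)
    · -- x ∈ thickening δ (segment (f r) (g r))
      obtain ⟨a, s, ha, hs, hsum, hxe⟩ := hx1
      rw [Metric.mem_thickening_iff]
      refine ⟨a • f r + s • g r, ⟨a, s, ha, hs, hsum, rfl⟩, ?_⟩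
      rw [← hxe]
      calc dist (a • f r' + s • g r') (a • f r + s • g r)
          = ‖(a • f r' + s • g r') - (a • f r + s • g r)‖ := dist_eq_norm _ _
        _ = ‖a • (f r' - f r) + s • (g r' - g r)‖ := by rw [show (a • f r' + s • g r') -
              (a • f r + s • g r) = a • (f r' - f r) + s • (g r' - g r) by module]
        _ ≤ ‖a • (f r' - f r)‖ + ‖s • (g r' - g r)‖ := norm_add_le _ _
        _ = a * ‖f r' - f r‖ + s * ‖g r' - g r‖ := by
              rw [norm_smul, norm_smul, Real.norm_eq_abs, Real.norm_eq_abs,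
                abs_of_nonneg ha, abs_of_nonneg hs]
        _ < δ := by
              rw [dist_eq_norm] at hd1 hd2
              set n1 := ‖f r' - f r‖ with hn1
              set n2 := ‖g r' - g r‖ with hn2
              have hm1 : n1 ≤ max n1 n2 := le_max_left _ _
              have hm2 : n2 ≤ max n1 n2 := le_max_right _ _
              have hmlt : max n1 n2 < δ := max_lt hd1 hd2
              have hkey : a * max n1 n2 + s * max n1 n2 = max n1 n2 := by
                rw [← add_mul, hsum, one_mul]
              have hk1 : a * n1 ≤ a * max n1 n2 := mul_le_mul_of_nonneg_left hm1 ha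
              have hk2 : s * n2 ≤ s * max n1 n2 := mul_le_mul_of_nonneg_left hm2 hs
              linarith
  rcases isClopen_iff.mp ⟨hclosed, hopen⟩ with h' | h'
  · exact Or.inr h'
  · exact Or.inl h'
end

section
/- Let X be a metric space and let f, g : [0,1] → X be continuous curves. Let 0 = s_0 ≤ s_1 ≤ … ≤ s_p = 1 and 0 = t_0 ≤ t_1 ≤ … ≤ t_q = 1, set u_i = f(s_i) and v_j = g(t_j), and suppose the subdivisions have deviation at most η ≥ 0, i.e. for every i and every s ∈ [s_i, s_{i+1}], dist(f(s), f(s_i)) ≤ η and dist(f(s), f(s_{i+1})) ≤ η, and likewise for g on each [t_j, t_{j+1}]. Then δ_dF(u, v) ≤ δ_F(f, g) + η. -/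
open unitInterval

/-- A reparametrization: a continuous nondecreasing surjection of `[0,1]` onto itself. -/
def IsReparam (α : I → I) : Prop :=
  Continuous α ∧ Monotone α ∧ Function.Surjective α

/-- The continuous Fréchet distance between two curves `f, g : [0,1] → X`:
the infimum over all pairs of reparametrizations `(α, β)` of
`sup_{r ∈ [0,1]} dist (f (α r)) (g (β r))`. -/
noncomputable def frechetDist {X : Type*} [MetricSpace X] (f g : I → X) : ℝ :=
  sInf { d | ∃ α β : I → I, IsReparam α ∧ IsReparam β ∧
    d = ⨆ r : I, dist (f (α r)) (g (β r)) }

/-- `IsCoupling p q m a b`: the index pairs `(a 0, b 0), …, (a m, b m)` form a coupling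
between sequences indexed by `0,…,p` and `0,…,q`. -/
def IsCoupling (p q m : ℕ) (a b : ℕ → ℕ) : Prop :=
  a 0 = 0 ∧ b 0 = 0 ∧ a m = p ∧ b m = q ∧
  (∀ l < m, a (l + 1) = a l ∨ a (l + 1) = a l + 1) ∧
  (∀ l < m, b (l + 1) = b l ∨ b (l + 1) = b l + 1)

/-- The discrete Fréchet distance between the finite sequences `u 0, …, u p` and
`v 0, …, v q`, computed with respect to the distance function `d`: the infimum over all
couplings of the maximum of `d` over the coupled pairs. -/
noncomputable def discreteFrechetWith {X : Type*} (d : X → X → ℝ)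
    (p q : ℕ) (u v : ℕ → X) : ℝ :=
  sInf { c | ∃ m : ℕ, ∃ a b : ℕ → ℕ, IsCoupling p q m a b ∧
    c = (Finset.range (m + 1)).sup' Finset.nonempty_range_add_one
      (fun l => d (u (a l)) (v (b l))) }

/-- The discrete Fréchet distance with respect to the metric of `X`. -/
noncomputable def discreteFrechet {X : Type*} [MetricSpace X]
    (p q : ℕ) (u v : ℕ → X) : ℝ :=
  discreteFrechetWith dist p q u v

/-- Lift a monotone sequence of targets through a monotone surjection of `I`,
obtaining a monotone sequence of preimages, which is `1` whenever the target is `1`. -/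
lemma exists_lift (α : I → I) (hmono : Monotone α) (hsurj : Function.Surjective α)
    (s' : ℕ → I) (hs'mono : Monotone s') (hs'0 : s' 0 = 0) :
    ∃ r : ℕ → I, r 0 = 0 ∧ Monotone r ∧ (∀ i, α (r i) = s' i) ∧
      (∀ i, s' i = 1 → r i = 1) := by
  have hα0 : α 0 = 0 := by
    obtain ⟨x, hx⟩ := hsurj 0
    have h := hmono (show (0:I) ≤ x from nonneg')
    rw [hx] at h
    exact le_antisymm h nonneg'
  have hα1 : α 1 = 1 := by
    obtain ⟨x, hx⟩ := hsurj 1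
    have h := hmono (show x ≤ (1:I) from le_one')
    rw [hx] at h
    exact le_antisymm le_one' h
  have step : ∀ i (x : I), α x = s' i →
      ∃ y : I, x ≤ y ∧ (α y = s' (i+1) ∧ (s' (i+1) = 1 → y = 1)) := by
    intro i x hx
    by_cases h1 : s' (i+1) = 1
    · exact ⟨1, le_one', by rw [hα1, h1], fun _ => rfl⟩
    · obtain ⟨y, hy⟩ := hsurj (s' (i+1))
      refine ⟨max x y, le_max_left _ _, ?_, fun h => absurd h h1⟩
      rcases le_total x y with h | h
      · rw [max_eq_right h, hy]
      · rw [max_eq_left h, hx]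
        have h2 : s' (i+1) ≤ s' i := by rw [← hy, ← hx]; exact hmono h
        exact le_antisymm (hs'mono (Nat.le_succ i)) h2 |>.symm ▸ rfl
  choose Y hY1 hY2 using step
  have h00 : α 0 = s' 0 := by rw [hα0, hs'0]
  let g : ∀ _ : ℕ, {x : I // α x = s' _} := fun i =>
    Nat.rec (motive := fun i => {x : I // α x = s' i}) ⟨0, h00⟩
      (fun n pr => ⟨Y n pr.1 pr.2, (hY2 n pr.1 pr.2).1⟩) i
  refine ⟨fun i => (g i).1, rfl, monotone_nat_of_le_succ (fun i => hY1 i (g i).1 (g i).2),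
    fun i => (g i).2, ?_⟩
  intro i h1
  cases i with
  | zero =>
    rw [hs'0] at h1
    have : (0:ℝ) = 1 := congrArg Subtype.val h1
    norm_num at this
  | succ n => exact (hY2 n (g n).1 (g n).2).2 h1

open Classical in
/-- One step of the greedy coupling walk. -/
noncomputable def couplingStep (p q : ℕ) (r ρ : ℕ → I) (ij : ℕ × ℕ) : ℕ × ℕ :=
  if ij.2 = q then (ij.1 + 1, ij.2)
  else if ij.1 = p then (ij.1, ij.2 + 1)
  else if r (ij.1 + 1) ≤ ρ (ij.2 + 1) then (ij.1 + 1, ij.2) else (ij.1, ij.2 + 1)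

lemma couplingStep_or (p q : ℕ) (r ρ : ℕ → I) (ij : ℕ × ℕ) :
    couplingStep p q r ρ ij = (ij.1 + 1, ij.2) ∨ couplingStep p q r ρ ij = (ij.1, ij.2 + 1) := by
  unfold couplingStep
  split_ifs <;> simp

/-- for subdivisions of deviation at most `η`, the discrete Fréchet distance
of the vertex sequences is at most the continuous Fréchet distance plus `η`. -/
theorem discreteFrechet_le_frechetDist_add
    {X : Type*} [MetricSpace X] (f g : I → X) (hf : Continuous f) (hg : Continuous g)
    (p q : ℕ) (s t : ℕ → I)
    (hs0 : s 0 = 0) (hsp : s p = 1) (hsmono : ∀ i < p, s i ≤ s (i + 1))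
    (ht0 : t 0 = 0) (htq : t q = 1) (htmono : ∀ j < q, t j ≤ t (j + 1))
    (η : ℝ) (hη : 0 ≤ η)
    (hdevf : ∀ i < p, ∀ x : I, s i ≤ x → x ≤ s (i + 1) →
      dist (f x) (f (s i)) ≤ η ∧ dist (f x) (f (s (i + 1))) ≤ η)
    (hdevg : ∀ j < q, ∀ x : I, t j ≤ x → x ≤ t (j + 1) →
      dist (g x) (g (t j)) ≤ η ∧ dist (g x) (g (t (j + 1))) ≤ η) :
    discreteFrechet p q (fun i => f (s i)) (fun j => g (t j)) ≤ frechetDist f g + η := by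
  classical
  -- monotonicity of s, t on their ranges
  have smono : ∀ j ≤ p, ∀ i ≤ j, s i ≤ s j := by
    intro j hj
    induction j with
    | zero => intro i hi; interval_cases i; exact le_rfl
    | succ n ih =>
      intro i hi
      rcases Nat.lt_succ_iff_lt_or_eq.mp (Nat.lt_succ_of_le hi) with h | h
      · exact (ih (by omega) i (by omega)).trans (hsmono n (by omega))
      · exact h ▸ le_rfl
  have tmono : ∀ j ≤ q, ∀ i ≤ j, t i ≤ t j := by
    intro j hj
    induction j with
    | zero => intro i hi; interval_cases i; exact le_rfl
    | succ n ih =>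
      intro i hi
      rcases Nat.lt_succ_iff_lt_or_eq.mp (Nat.lt_succ_of_le hi) with h | h
      · exact (ih (by omega) i (by omega)).trans (htmono n (by omega))
      · exact h ▸ le_rfl
  -- extended subdivision sequences
  set s' : ℕ → I := fun i => s (min i p) with hs'def
  set t' : ℕ → I := fun j => t (min j q) with ht'def
  have hs'mono : Monotone s' := fun i j h => smono (min j p) (by omega) (min i p) (by omega)
  have ht'mono : Monotone t' := fun i j h => tmono (min j q) (by omega) (min i q) (by omega)
  have hs'0 : s' 0 = 0 := by simp [hs'def, hs0]
  have ht'0 : t' 0 = 0 := by simp [ht'def, ht0]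
  have hs'top : ∀ i, p ≤ i → s' i = 1 := by
    intro i h; simp [hs'def, Nat.min_eq_right h, hsp]
  have ht'top : ∀ j, q ≤ j → t' j = 1 := by
    intro j h; simp [ht'def, Nat.min_eq_right h, htq]
  have hs'eq : ∀ i, i ≤ p → s' i = s i := by
    intro i h; simp [hs'def, Nat.min_eq_left h]
  have ht'eq : ∀ j, j ≤ q → t' j = t j := by
    intro j h; simp [ht'def, Nat.min_eq_left h]
  -- deviation lemmas for extended sequences
  have hdevf' : ∀ i, ∀ x : I, s' i ≤ x → x ≤ s' (i+1) → dist (f x) (f (s' i)) ≤ η := by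
    intro i x h1 h2
    rcases lt_or_ge i p with h | h
    · rw [hs'eq i h.le] at h1 ⊢
      rw [hs'eq (i+1) h] at h2
      exact (hdevf i h x h1 h2).1
    · have e1 : s' i = 1 := hs'top i h
      have e2 : x = s' i := le_antisymm (e1 ▸ le_one') h1
      rw [e2]; simpa using hη
  have hdevg' : ∀ j, ∀ x : I, t' j ≤ x → x ≤ t' (j+1) → dist (g x) (g (t' j)) ≤ η := by
    intro j x h1 h2
    rcases lt_or_ge j q with h | h
    · rw [ht'eq j h.le] at h1 ⊢
      rw [ht'eq (j+1) h] at h2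
      exact (hdevg j h x h1 h2).1
    · have e1 : t' j = 1 := ht'top j h
      have e2 : x = t' j := le_antisymm (e1 ▸ le_one') h1
      rw [e2]; simpa using hη
  -- main bound for each pair of reparametrizations
  have key : ∀ d ∈ { d | ∃ α β : I → I, IsReparam α ∧ IsReparam β ∧
      d = ⨆ r : I, dist (f (α r)) (g (β r)) },
      discreteFrechet p q (fun i => f (s i)) (fun j => g (t j)) ≤ d + η := by
    rintro d ⟨α, β, ⟨hαc, hαm, hαs⟩, ⟨hβc, hβm, hβs⟩, rfl⟩
    obtain ⟨r, hr0, hrmono, hrα, hr1⟩ := exists_lift α hαm hαs s' hs'mono hs'0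
    obtain ⟨ρ, hρ0, hρmono, hρβ, hρ1⟩ := exists_lift β hβm hβs t' ht'mono ht'0
    have hD : ∀ x : I, dist (f (α x)) (g (β x)) ≤ ⨆ y : I, dist (f (α y)) (g (β y)) := by
      have hb : BddAbove (Set.range fun x : I => dist (f (α x)) (g (β x))) :=
        (isCompact_range ((hf.comp hαc).dist (hg.comp hβc))).bddAbove
      exact fun x => le_ciSup hb x
    -- the key geometric estimate
    have est : ∀ i j, r i ≤ ρ (j+1) → ρ j ≤ r (i+1) →
        dist (f (s' i)) (g (t' j)) ≤ (⨆ x : I, dist (f (α x)) (g (β x))) + η := by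
      intro i j h1 h2
      rcases le_total (ρ j) (r i) with h | h
      · have k1 : t' j ≤ β (r i) := by rw [← hρβ j]; exact hβm h
        have k2 : β (r i) ≤ t' (j+1) := by rw [← hρβ (j+1)]; exact hβm h1
        have A : dist (g (β (r i))) (g (t' j)) ≤ η := hdevg' j _ k1 k2
        have B : dist (f (s' i)) (g (β (r i))) ≤ ⨆ x : I, dist (f (α x)) (g (β x)) := by
          rw [← hrα i]; exact hD (r i)
        linarith [dist_triangle (f (s' i)) (g (β (r i))) (g (t' j))]
      · have k1 : s' i ≤ α (ρ j) := by rw [← hrα i]; exact hαm h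
        have k2 : α (ρ j) ≤ s' (i+1) := by rw [← hrα (i+1)]; exact hαm h2
        have A : dist (f (s' i)) (f (α (ρ j))) ≤ η := by
          rw [dist_comm]; exact hdevf' i _ k1 k2
        have B : dist (f (α (ρ j))) (g (t' j)) ≤ ⨆ x : I, dist (f (α x)) (g (β x)) := by
          rw [← hρβ j]; exact hD (ρ j)
        linarith [dist_triangle (f (s' i)) (f (α (ρ j))) (g (t' j))]
    -- build the coupling walk
    set c : ℕ → ℕ × ℕ := fun l => (couplingStep p q r ρ)^[l] (0, 0) with hcdef
    have hc0 : c 0 = (0, 0) := rfl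
    have hcs : ∀ l, c (l+1) = couplingStep p q r ρ (c l) := fun l =>
      Function.iterate_succ_apply' _ l (0, 0)
    have hcount : ∀ l, l ≤ p + q → (c l).1 + (c l).2 = l ∧ (c l).1 ≤ p ∧ (c l).2 ≤ q := by
      intro l
      induction l with
      | zero => intro _; simp [hc0]
      | succ n ih =>
        intro h
        obtain ⟨h1, h2, h3⟩ := ih (by omega)
        rw [hcs]
        unfold couplingStep
        split_ifs with hq hp hrr <;> simp <;> omega
    have hinv : ∀ l, l ≤ p + q → r ((c l).1) ≤ ρ ((c l).2 + 1) ∧ ρ ((c l).2) ≤ r ((c l).1 + 1) := by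
      intro l
      induction l with
      | zero =>
        intro _
        rw [hc0]
        constructor
        · rw [hr0]; exact nonneg'
        · rw [hρ0]; exact nonneg'
      | succ n ih =>
        intro h
        obtain ⟨I1, I2⟩ := ih (by omega)
        obtain ⟨h1, h2, h3⟩ := hcount n (by omega)
        rw [hcs]
        unfold couplingStep
        split_ifs with hq hp hrr
        · -- j = q, advance i
          refine ⟨?_, ?_⟩
          · simp only
            have : ρ ((c n).2 + 1) = 1 := hρ1 _ (by rw [hq]; exact ht'top _ (Nat.le_succ q))
            rw [this]; exact le_one'
          · simp only
            exact I2.trans (hrmono (Nat.le_succ _))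
        · -- i = p, advance j
          refine ⟨?_, ?_⟩
          · simp only
            exact I1.trans (hρmono (Nat.le_succ _))
          · simp only
            have : r ((c n).1 + 1) = 1 := hr1 _ (by rw [hp]; exact hs'top _ (Nat.le_succ p))
            rw [this]; exact le_one'
        · -- advance i
          exact ⟨hrr, I2.trans (hrmono (Nat.le_succ _))⟩
        · -- advance j
          exact ⟨I1.trans (hρmono (Nat.le_succ _)), (not_le.mp hrr).le⟩
    -- the coupling
    have hcoupling : IsCoupling p q (p + q) (fun l => (c l).1) (fun l => (c l).2) := by
      obtain ⟨h1, h2, h3⟩ := hcount (p + q) le_rfl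
      refine ⟨by simp [hc0], by simp [hc0], by show (c (p+q)).1 = p; omega,
        by show (c (p+q)).2 = q; omega, ?_, ?_⟩
      · intro l _
        have hc := hcs l
        rcases couplingStep_or p q r ρ (c l) with h | h <;> rw [h] at hc <;> simp [hc]
      · intro l _
        have hc := hcs l
        rcases couplingStep_or p q r ρ (c l) with h | h <;> rw [h] at hc <;> simp [hc]
    -- the value of the coupling
    have hval : ((Finset.range (p + q + 1)).sup' Finset.nonempty_range_add_one
        (fun l => dist ((fun i => f (s i)) ((c l).1)) ((fun j => g (t j)) ((c l).2))))
        ≤ (⨆ x : I, dist (f (α x)) (g (β x))) + η := by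
      apply Finset.sup'_le
      intro l hl
      rw [Finset.mem_range] at hl
      have hl' : l ≤ p + q := by omega
      obtain ⟨h1, h2, h3⟩ := hcount l hl'
      obtain ⟨I1, I2⟩ := hinv l hl'
      simp only
      rw [← hs'eq _ h2, ← ht'eq _ h3]
      exact est _ _ I1 I2
    -- discrete Fréchet distance is at most the value of this coupling
    have hbdd : BddBelow { c' | ∃ m : ℕ, ∃ a b : ℕ → ℕ, IsCoupling p q m a b ∧
        c' = (Finset.range (m + 1)).sup' Finset.nonempty_range_add_one
          (fun l => dist ((fun i => f (s i)) (a l)) ((fun j => g (t j)) (b l))) } := by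
      refine ⟨0, ?_⟩
      rintro x ⟨m', a, b, hcpl, rfl⟩
      exact le_trans dist_nonneg
        (Finset.le_sup' (fun l => dist ((fun i => f (s i)) (a l)) ((fun j => g (t j)) (b l)))
          (Finset.mem_range.mpr (Nat.succ_pos m')))
    have hmem : ((Finset.range (p + q + 1)).sup' Finset.nonempty_range_add_one
        (fun l => dist ((fun i => f (s i)) ((c l).1)) ((fun j => g (t j)) ((c l).2))))
        ∈ { c' | ∃ m : ℕ, ∃ a b : ℕ → ℕ, IsCoupling p q m a b ∧
        c' = (Finset.range (m + 1)).sup' Finset.nonempty_range_add_one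
          (fun l => dist ((fun i => f (s i)) (a l)) ((fun j => g (t j)) (b l))) } :=
      ⟨p + q, fun l => (c l).1, fun l => (c l).2, hcoupling, rfl⟩
    calc discreteFrechet p q (fun i => f (s i)) (fun j => g (t j))
        ≤ _ := csInf_le hbdd hmem
      _ ≤ _ := hval
  -- conclude
  have hne : Set.Nonempty { d | ∃ α β : I → I, IsReparam α ∧ IsReparam β ∧
      d = ⨆ r : I, dist (f (α r)) (g (β r)) } :=
    ⟨_, id, id, ⟨continuous_id, monotone_id, Function.surjective_id⟩,
      ⟨continuous_id, monotone_id, Function.surjective_id⟩, rfl⟩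
  have h2 : discreteFrechet p q (fun i => f (s i)) (fun j => g (t j)) - η ≤ frechetDist f g :=
    le_csInf hne (fun d hd => by linarith [key d hd])
  linarith
end

section
/- Let X be a metric space, let f, g : [0,1] → X be continuous curves, let 0 < ε, and let B > 0 with B ≤ δ_F(f,g). Let 0 = s_0 ≤ s_1 ≤ … ≤ s_p = 1 and 0 = t_0 ≤ t_1 ≤ … ≤ t_q = 1, set u_i = f(s_i) and v_j = g(t_j), and suppose the subdivisions have deviation at most εB/2, i.e. for every i and every s ∈ [s_i, s_{i+1}], dist(f(s), f(s_i)) ≤ εB/2 and dist(f(s), f(s_{i+1})) ≤ εB/2, and likewise for g on each [t_j, t_{j+1}]. Then (1−ε)·δ_F(f,g) ≤ δ_dF(u,v) ≤ (1+ε)·δ_F(f,g). -/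
open unitInterval

namespace FrechetAux


lemma reparam_zero {α : I → I} (h : IsReparam α) : α 0 = 0 := by
  obtain ⟨r, hr⟩ := h.2.2 0
  have : α 0 ≤ α r := h.2.1 nonneg'
  rw [hr] at this
  exact le_antisymm this nonneg'

lemma reparam_one {α : I → I} (h : IsReparam α) : α 1 = 1 := by
  obtain ⟨r, hr⟩ := h.2.2 1
  have : α r ≤ α 1 := h.2.1 le_one'
  rw [hr] at this
  exact le_antisymm le_one' this

open Classical in
noncomputable def mergeSeq (p q : ℕ) (R P : ℕ → I) : ℕ → ℕ × ℕ
  | 0 => (0, 0)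
  | l+1 =>
      let c := mergeSeq p q R P l
      if c.1 < p ∧ (q ≤ c.2 ∨ R (c.1+1) ≤ P (c.2+1)) then (c.1+1, c.2) else (c.1, c.2+1)

lemma mergeSeq_spec (p q : ℕ) (R P : ℕ → I) (hR : Monotone R) (hP : Monotone P)
    (hR0 : R 0 = 0) (hP0 : P 0 = 0) :
    ∀ l ≤ p + q, (mergeSeq p q R P l).1 + (mergeSeq p q R P l).2 = l ∧
      (mergeSeq p q R P l).1 ≤ p ∧ (mergeSeq p q R P l).2 ≤ q ∧
      ((mergeSeq p q R P l).1 < p →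
        P (mergeSeq p q R P l).2 ≤ R ((mergeSeq p q R P l).1 + 1)) ∧
      ((mergeSeq p q R P l).2 < q →
        R (mergeSeq p q R P l).1 ≤ P ((mergeSeq p q R P l).2 + 1)) := by
  intro l
  induction l with
  | zero =>
    intro _
    exact ⟨rfl, Nat.zero_le _, Nat.zero_le _, fun _ => hP0 ▸ nonneg',
      fun _ => hR0 ▸ nonneg'⟩
  | succ l ih =>
    intro hl
    obtain ⟨hsum, hip, hjq, inv1, inv2⟩ := ih (Nat.le_of_succ_le hl)
    set i := (mergeSeq p q R P l).1 with hi
    set j := (mergeSeq p q R P l).2 with hj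
    have hstep : mergeSeq p q R P (l+1) =
        if i < p ∧ (q ≤ j ∨ R (i+1) ≤ P (j+1)) then (i+1, j) else (i, j+1) := rfl
    by_cases hc : i < p ∧ (q ≤ j ∨ R (i+1) ≤ P (j+1))
    · rw [hstep, if_pos hc]
      obtain ⟨hip', hdisj⟩ := hc
      refine ⟨by omega, by omega, hjq, ?_, ?_⟩
      · intro _
        exact (inv1 hip').trans (hR (Nat.le_succ _))
      · intro hjq'
        rcases hdisj with h | h
        · omega
        · exact h
    · rw [hstep, if_neg hc]
      push_neg at hc
      have hjq' : j < q := by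
        rcases Nat.lt_or_ge i p with h | h
        · exact (hc h).1
        · omega
      refine ⟨by omega, hip, hjq', ?_, ?_⟩
      · intro hip'
        exact le_of_lt (hc hip').2
      · intro _
        exact (inv2 hjq').trans (hP (Nat.le_succ _))

lemma exists_good_coupling (p q : ℕ) (R P : ℕ → I) (hR : Monotone R) (hP : Monotone P)
    (hR0 : R 0 = 0) (hP0 : P 0 = 0) :
    ∃ a b : ℕ → ℕ, IsCoupling p q (p + q) a b ∧
      ∀ l ≤ p + q, a l ≤ p ∧ b l ≤ q ∧ ∃ r : I,
        R (a l) ≤ r ∧ P (b l) ≤ r ∧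
        (a l < p → r ≤ R (a l + 1)) ∧ (b l < q → r ≤ P (b l + 1)) := by
  have hspec := mergeSeq_spec p q R P hR hP hR0 hP0
  refine ⟨fun l => (mergeSeq p q R P l).1, fun l => (mergeSeq p q R P l).2, ?_, ?_⟩
  · obtain ⟨hsum, hip, hjq, _, _⟩ := hspec (p+q) le_rfl
    refine ⟨rfl, rfl, ?_, ?_, ?_, ?_⟩
    · show (mergeSeq p q R P (p+q)).1 = p
      omega
    · show (mergeSeq p q R P (p+q)).2 = q
      omega
    · intro l hl
      have hstep : mergeSeq p q R P (l+1) =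
          if (mergeSeq p q R P l).1 < p ∧ (q ≤ (mergeSeq p q R P l).2 ∨
            R ((mergeSeq p q R P l).1+1) ≤ P ((mergeSeq p q R P l).2+1))
          then ((mergeSeq p q R P l).1+1, (mergeSeq p q R P l).2)
          else ((mergeSeq p q R P l).1, (mergeSeq p q R P l).2+1) := rfl
      by_cases hc : (mergeSeq p q R P l).1 < p ∧ (q ≤ (mergeSeq p q R P l).2 ∨
          R ((mergeSeq p q R P l).1+1) ≤ P ((mergeSeq p q R P l).2+1))
      · right
        show (mergeSeq p q R P (l+1)).1 = _
        rw [hstep, if_pos hc]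
      · left
        show (mergeSeq p q R P (l+1)).1 = _
        rw [hstep, if_neg hc]
    · intro l hl
      have hstep : mergeSeq p q R P (l+1) =
          if (mergeSeq p q R P l).1 < p ∧ (q ≤ (mergeSeq p q R P l).2 ∨
            R ((mergeSeq p q R P l).1+1) ≤ P ((mergeSeq p q R P l).2+1))
          then ((mergeSeq p q R P l).1+1, (mergeSeq p q R P l).2)
          else ((mergeSeq p q R P l).1, (mergeSeq p q R P l).2+1) := rfl
      by_cases hc : (mergeSeq p q R P l).1 < p ∧ (q ≤ (mergeSeq p q R P l).2 ∨
          R ((mergeSeq p q R P l).1+1) ≤ P ((mergeSeq p q R P l).2+1))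
      · left
        show (mergeSeq p q R P (l+1)).2 = _
        rw [hstep, if_pos hc]
      · right
        show (mergeSeq p q R P (l+1)).2 = _
        rw [hstep, if_neg hc]
  · intro l hl
    obtain ⟨hsum, hip, hjq, inv1, inv2⟩ := hspec l hl
    refine ⟨hip, hjq, max (R (mergeSeq p q R P l).1) (P (mergeSeq p q R P l).2),
      le_max_left _ _, le_max_right _ _, ?_, ?_⟩
    · intro hlt
      exact max_le (hR (Nat.le_succ _)) (inv1 hlt)
    · intro hlt
      exact max_le (inv2 hlt) (hP (Nat.le_succ _))



noncomputable def plf (c : ℕ → ℝ) (m : ℕ) (x : ℝ) : ℝ :=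
  ∑ l ∈ Finset.range m, (c (l+1) - c l) * (min 1 (max 0 (x - l)))

lemma plf_continuous (c : ℕ → ℝ) (m : ℕ) : Continuous (plf c m) := by
  apply continuous_finset_sum
  intro l _
  exact continuous_const.mul (Continuous.min continuous_const
    (Continuous.max continuous_const (continuous_id.sub continuous_const)))

lemma plf_mono {c : ℕ → ℝ} {m : ℕ} (hc : ∀ l < m, c l ≤ c (l+1)) : Monotone (plf c m) := by
  intro x y hxy
  apply Finset.sum_le_sum
  intro l hl
  have h1 : 0 ≤ c (l+1) - c l := sub_nonneg.2 (hc l (Finset.mem_range.1 hl))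
  refine mul_le_mul_of_nonneg_left ?_ h1
  exact min_le_min le_rfl (max_le_max le_rfl (by linarith))

lemma plf_nat (c : ℕ → ℝ) (m k : ℕ) : plf c m (k : ℝ) = c (min k m) - c 0 := by
  induction m with
  | zero => simp [plf]
  | succ m ih =>
    rw [plf, Finset.sum_range_succ, ← plf, ih]
    rcases le_or_gt k m with h | h
    · have h1 : ((k:ℝ) - m) ≤ 0 := sub_nonpos.2 (Nat.cast_le.2 h)
      rw [min_eq_left h, min_eq_left (h.trans (Nat.le_succ m)), max_eq_left h1]
      simp
    · have h1 : (1:ℝ) ≤ (k:ℝ) - m := by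
        have := Nat.cast_le (α := ℝ).2 h
        push_cast at this ⊢
        linarith
      rw [min_eq_right (Nat.le_of_lt_succ (Nat.lt_succ_of_lt h)), min_eq_right (show m + 1 ≤ k from h),
        max_eq_right (by linarith : (0:ℝ) ≤ (k:ℝ) - m), min_eq_left h1]
      ring

noncomputable def idx (m : ℕ) (r : I) : ℕ := min (Nat.floor ((m:ℝ) * r)) (m-1)

lemma idx_lt {m : ℕ} (hm : 1 ≤ m) (r : I) : idx m r < m :=
  lt_of_le_of_lt (min_le_right _ _) (by omega)

lemma idx_bounds {m : ℕ} (hm : 1 ≤ m) (r : I) :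
    (idx m r : ℝ) ≤ (m:ℝ) * r ∧ (m:ℝ) * r ≤ (idx m r : ℝ) + 1 := by
  have hx0 : 0 ≤ (m:ℝ) * r := mul_nonneg (Nat.cast_nonneg m) r.2.1
  have hxm : (m:ℝ) * r ≤ m := by
    calc (m:ℝ) * r ≤ (m:ℝ) * 1 := mul_le_mul_of_nonneg_left r.2.2 (Nat.cast_nonneg m)
      _ = m := mul_one _
  unfold idx
  rcases le_or_gt m (Nat.floor ((m:ℝ) * r)) with h | h
  · have hxm' : (m:ℝ) ≤ (m:ℝ) * r := (Nat.le_floor_iff hx0).1 h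
    have hxeq : (m:ℝ) * r = m := le_antisymm hxm hxm'
    rw [min_eq_right (by omega : m - 1 ≤ Nat.floor ((m:ℝ) * r)), hxeq]
    have hc : ((m - 1 : ℕ) : ℝ) = (m:ℝ) - 1 := by rw [Nat.cast_sub hm]; simp
    rw [hc]
    constructor <;> linarith
  · rw [min_eq_left (by omega : Nat.floor ((m:ℝ) * r) ≤ m - 1)]
    exact ⟨Nat.floor_le hx0, le_of_lt (Nat.lt_floor_add_one _)⟩

lemma mono_of_step {s : ℕ → ℕ} {m : ℕ}
    (hstep : ∀ l < m, s (l+1) = s l ∨ s (l+1) = s l + 1) :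
    ∀ l l', l ≤ l' → l' ≤ m → s l ≤ s l' := by
  intro l l' hll' hl'm
  induction l' with
  | zero =>
    have : l = 0 := by omega
    subst this; exact le_rfl
  | succ n ih =>
    rcases Nat.le_succ_iff.mp hll' with h | h
    · have h1 : s l ≤ s n := ih h (by omega)
      rcases hstep n (by omega) with h2 | h2 <;> omega
    · subst h; exact le_rfl

lemma mono_of_le_step {β : Type*} [Preorder β] {s : ℕ → β} {m : ℕ}
    (hstep : ∀ l < m, s l ≤ s (l+1)) :
    ∀ l l', l ≤ l' → l' ≤ m → s l ≤ s l' := by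
  intro l l' hll' hl'm
  induction l' with
  | zero =>
    have : l = 0 := by omega
    subst this; exact le_rfl
  | succ n ih =>
    rcases Nat.le_succ_iff.mp hll' with h | h
    · exact (ih h (by omega)).trans (hstep n (by omega))
    · subst h; exact le_rfl

lemma exists_reparam_of_seq {m p : ℕ} (hm : 1 ≤ m) (s : ℕ → I) (a : ℕ → ℕ)
    (ha0 : a 0 = 0) (ham : a m = p) (hstep : ∀ l < m, a (l+1) = a l ∨ a (l+1) = a l + 1)
    (hs0 : s 0 = 0) (hsp : s p = 1) (hsmono : ∀ i < p, s i ≤ s (i+1)) :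
    ∃ α : I → I, IsReparam α ∧
      ∀ r : I, (s (a (idx m r)) : ℝ) ≤ α r ∧ (α r : ℝ) ≤ s (a (idx m r + 1)) := by
  have hamono : ∀ l l', l ≤ l' → l' ≤ m → a l ≤ a l' := mono_of_step hstep
  set c : ℕ → ℝ := fun l => (s (a (min l m)) : ℝ) with hcdef
  have hc : ∀ l < m, c l ≤ c (l+1) := by
    intro l hl
    have h1 : min l m = l := min_eq_left (by omega)
    have h2 : min (l+1) m = l + 1 := min_eq_left (by omega)
    rw [hcdef]
    simp only [h1, h2]
    rcases hstep l hl with h | h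
    · rw [h]
    · rw [h]
      have hap : a l < p := by
        have := hamono (l+1) m (by omega) le_rfl
        omega
      exact_mod_cast hsmono (a l) hap
  have hc0 : c 0 = 0 := by
    rw [hcdef]
    simp [ha0, hs0]
  have hcm : c m = 1 := by
    rw [hcdef]; simp [ham, hsp]
  have hmono := plf_mono hc
  have h0 : plf c m 0 = 0 := by
    have := plf_nat c m 0
    rw [Nat.cast_zero] at this
    rw [this]
    simp [hc0]
  have hm1 : plf c m m = 1 := by
    have := plf_nat c m m
    rw [min_self] at this
    rw [this, hc0, hcm]; ring
  have hmem : ∀ r : I, plf c m ((m:ℝ) * r) ∈ I := by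
    intro r
    constructor
    · rw [← h0]
      exact hmono (mul_nonneg (Nat.cast_nonneg m) r.2.1)
    · rw [← hm1]
      refine hmono ?_
      calc (m:ℝ) * r ≤ (m:ℝ) * 1 := mul_le_mul_of_nonneg_left r.2.2 (Nat.cast_nonneg m)
        _ = m := mul_one _
  refine ⟨fun r => ⟨plf c m ((m:ℝ) * r), hmem r⟩, ⟨?_, ?_, ?_⟩, ?_⟩
  · exact Continuous.subtype_mk
      ((plf_continuous c m).comp (continuous_const.mul continuous_subtype_val)) _
  · intro r r' hrr'
    rw [Subtype.mk_le_mk]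
    exact hmono (mul_le_mul_of_nonneg_left (Subtype.coe_le_coe.2 hrr') (Nat.cast_nonneg m))
  · intro y
    have hcont : Continuous (fun x : ℝ => plf c m ((m:ℝ) * x)) :=
      (plf_continuous c m).comp (continuous_const.mul continuous_id)
    have hy : (y : ℝ) ∈ Set.Icc (plf c m ((m:ℝ) * 0)) (plf c m ((m:ℝ) * 1)) := by
      rw [mul_zero, mul_one, h0, hm1]
      exact y.2
    obtain ⟨x, hx, hxy⟩ := intermediate_value_Icc zero_le_one hcont.continuousOn hy
    exact ⟨⟨x, hx⟩, Subtype.ext hxy⟩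
  · intro r
    obtain ⟨hb1, hb2⟩ := idx_bounds hm r
    have hl := idx_lt hm r
    have hv1 : plf c m (idx m r : ℝ) = c (idx m r) := by
      rw [plf_nat, min_eq_left hl.le, hc0]; ring
    have hv2 : plf c m ((idx m r : ℝ) + 1) = c (idx m r + 1) := by
      have : ((idx m r : ℝ) + 1) = ((idx m r + 1 : ℕ) : ℝ) := by push_cast; ring
      rw [this, plf_nat, min_eq_left (by omega), hc0]; ring
    have hcl : c (idx m r) = (s (a (idx m r)) : ℝ) := by
      rw [hcdef]; simp only [min_eq_left hl.le]
    have hcl1 : c (idx m r + 1) = (s (a (idx m r + 1)) : ℝ) := by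
      rw [hcdef]; simp only [min_eq_left (by omega : idx m r + 1 ≤ m)]
    constructor
    · rw [← hcl, ← hv1]
      exact hmono hb1
    · rw [← hcl1, ← hv2]
      exact hmono hb2

lemma exists_reparam_points {α : I → I} (hα : IsReparam α) (p : ℕ) (s : ℕ → I)
    (hs0 : s 0 = 0) (hsmono : ∀ i i', i ≤ i' → i' ≤ p → s i ≤ s i') :
    ∃ R : ℕ → I, Monotone R ∧ R 0 = 0 ∧ ∀ i ≤ p, α (R i) = s i := by
  obtain ⟨hcont, hmono, hsurj⟩ := hα
  set A : ℝ → ℝ := fun x => (α (Set.projIcc 0 1 zero_le_one x) : ℝ) with hA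
  have hAcont : Continuous A :=
    continuous_subtype_val.comp (hcont.comp continuous_projIcc)
  have hAcoe : ∀ r : I, A r = α r := by
    intro r
    rw [hA]
    simp [Set.projIcc_val]
  have hA0 : A 0 = 0 := by
    rw [hA]
    simp only [Set.projIcc_left]
    have h0 : (⟨(0:ℝ), Set.left_mem_Icc.2 zero_le_one⟩ : I) = (0 : I) := rfl
    rw [h0, reparam_zero ⟨hcont, hmono, hsurj⟩]
    rfl
  set S : ℕ → Set ℝ := fun i => Set.Icc (0:ℝ) 1 ∩ A ⁻¹' {(s (min i p) : ℝ)} with hS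
  have hcl : ∀ i, IsClosed (S i) :=
    fun i => isClosed_Icc.inter (isClosed_singleton.preimage hAcont)
  have hne : ∀ i, (S i).Nonempty := by
    intro i
    obtain ⟨r, hr⟩ := hsurj (s (min i p))
    exact ⟨r, r.2, by simp [hAcoe, hr]⟩
  have hbdd : ∀ i, BddBelow (S i) := fun i => ⟨0, fun x hx => hx.1.1⟩
  set RS : ℕ → ℝ := fun i => sInf (S i) with hRS
  have hmem : ∀ i, RS i ∈ S i := fun i => (hcl i).csInf_mem (hne i) (hbdd i)
  have hRSmono : ∀ i i', i ≤ i' → RS i ≤ RS i' := by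
    intro i i' hii'
    have hv : A (RS i') = (s (min i' p) : ℝ) := (hmem i').2
    have hy : (s (min i p) : ℝ) ∈ Set.Icc (A 0) (A (RS i')) := by
      rw [hA0, hv]
      exact ⟨(s (min i p)).2.1,
        Subtype.coe_le_coe.2 (hsmono _ _ (min_le_min_right p hii') (min_le_right _ _))⟩
    obtain ⟨x, hx, hax⟩ := intermediate_value_Icc (hmem i').1.1 hAcont.continuousOn hy
    have hxS : x ∈ S i := ⟨⟨hx.1, hx.2.trans (hmem i').1.2⟩, hax⟩
    exact (csInf_le (hbdd i) hxS).trans hx.2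
  set R : ℕ → I := fun i => Set.projIcc 0 1 zero_le_one (RS i) with hR
  have hval : ∀ i, α (R i) = s (min i p) := by
    intro i
    have := (hmem i).2
    exact Subtype.coe_injective this
  refine ⟨R, ?_, ?_, ?_⟩
  · exact fun i i' h => Set.monotone_projIcc zero_le_one (hRSmono i i' h)
  · have h1 : RS 0 ≤ 0 := by
      refine csInf_le (hbdd 0) ⟨Set.left_mem_Icc.2 zero_le_one, ?_⟩
      rw [Set.mem_preimage, hA0]
      simp [Nat.min_eq_left (Nat.zero_le p), hs0]
    have h2 : 0 ≤ RS 0 := (hmem 0).1.1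
    have h3 : RS 0 = 0 := le_antisymm h1 h2
    rw [hR]
    simp only [h3, Set.projIcc_left]
    rfl
  · intro i hip
    rw [hval i, min_eq_left hip]

end FrechetAux

/-- if the subdivisions have deviation at most `εB/2`, where `0 < B` is a lower
bound on the Fréchet distance, then the discrete Fréchet distance of the vertex sequences is
an `ε`-approximation of the continuous Fréchet distance. -/


theorem discreteFrechet_approx
    {X : Type*} [MetricSpace X] (f g : I → X) (hf : Continuous f) (hg : Continuous g)
    (ε : ℝ) (hε : 0 < ε) (B : ℝ) (hB : 0 < B) (hBle : B ≤ frechetDist f g)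
    (p q : ℕ) (s t : ℕ → I)
    (hs0 : s 0 = 0) (hsp : s p = 1) (hsmono : ∀ i < p, s i ≤ s (i + 1))
    (ht0 : t 0 = 0) (htq : t q = 1) (htmono : ∀ j < q, t j ≤ t (j + 1))
    (hdevf : ∀ i < p, ∀ x : I, s i ≤ x → x ≤ s (i + 1) →
      dist (f x) (f (s i)) ≤ ε * B / 2 ∧ dist (f x) (f (s (i + 1))) ≤ ε * B / 2)
    (hdevg : ∀ j < q, ∀ x : I, t j ≤ x → x ≤ t (j + 1) →
      dist (g x) (g (t j)) ≤ ε * B / 2 ∧ dist (g x) (g (t (j + 1))) ≤ ε * B / 2) :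
    (1 - ε) * frechetDist f g ≤
        discreteFrechet p q (fun i => f (s i)) (fun j => g (t j)) ∧
      discreteFrechet p q (fun i => f (s i)) (fun j => g (t j)) ≤
        (1 + ε) * frechetDist f g := by
  classical
  have hεB2 : (0:ℝ) ≤ ε * B / 2 := by positivity
  have sMono : ∀ i i', i ≤ i' → i' ≤ p → s i ≤ s i' := FrechetAux.mono_of_le_step hsmono
  have tMono : ∀ j j', j ≤ j' → j' ≤ q → t j ≤ t j' := FrechetAux.mono_of_le_step htmono
  set FSet := { d | ∃ α β : I → I, IsReparam α ∧ IsReparam β ∧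
    d = ⨆ r : I, dist (f (α r)) (g (β r)) } with hFSetdef
  set DSet := { c | ∃ m : ℕ, ∃ a b : ℕ → ℕ, IsCoupling p q m a b ∧
    c = (Finset.range (m + 1)).sup' Finset.nonempty_range_add_one
      (fun l => dist ((fun i => f (s i)) (a l)) ((fun j => g (t j)) (b l))) } with hDSetdef
  have hD_def : frechetDist f g = sInf FSet := rfl
  have hDF_def : discreteFrechet p q (fun i => f (s i)) (fun j => g (t j)) = sInf DSet := rfl
  have hFne : FSet.Nonempty :=
    ⟨_, id, id, ⟨continuous_id, monotone_id, Function.surjective_id⟩,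
      ⟨continuous_id, monotone_id, Function.surjective_id⟩, rfl⟩
  have hFbdd : BddBelow FSet := by
    refine ⟨0, ?_⟩
    rintro d ⟨α, β, -, -, rfl⟩
    exact Real.iSup_nonneg fun r => dist_nonneg
  have hDSne : DSet.Nonempty := by
    have hTriv : IsCoupling p q (p+q) (fun l => min l p) (fun l => l - min l p) := by
      refine ⟨?_, ?_, ?_, ?_, ?_, ?_⟩
      · show min 0 p = 0
        omega
      · show 0 - min 0 p = 0
        omega
      · show min (p+q) p = p
        omega
      · show p + q - min (p+q) p = q
        omega
      · intro l hl
        show min (l+1) p = min l p ∨ min (l+1) p = min l p + 1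
        omega
      · intro l hl
        show (l+1) - min (l+1) p = l - min l p ∨ (l+1) - min (l+1) p = l - min l p + 1
        omega
    exact ⟨_, p + q, _, _, hTriv, rfl⟩
  have hDSbdd : BddBelow DSet := by
    refine ⟨0, ?_⟩
    rintro c ⟨m, a, b, hab, rfl⟩
    have h0 : (0:ℕ) ∈ Finset.range (m+1) := by simp
    exact le_trans dist_nonneg
      (Finset.le_sup' (fun l => dist ((fun i => f (s i)) (a l)) ((fun j => g (t j)) (b l))) h0)
  have hεD : ε * B ≤ ε * frechetDist f g := mul_le_mul_of_nonneg_left hBle hε.le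
  constructor
  · -- lower bound
    rw [hDF_def]
    apply le_csInf hDSne
    rintro c ⟨m, a, b, hcpl, rfl⟩
    obtain ⟨ha0, hb0, ham, hbm, hastep, hbstep⟩ := hcpl
    have hm : 1 ≤ m := by
      by_contra h
      have hm0 : m = 0 := by omega
      subst hm0
      have hp0 : p = 0 := by omega
      rw [hp0] at hsp
      have : ((0:I) : ℝ) = ((1:I) : ℝ) := congrArg Subtype.val (hs0.symm.trans hsp)
      norm_num at this
    obtain ⟨α, hαrep, hαprop⟩ :=
      FrechetAux.exists_reparam_of_seq hm s a ha0 ham hastep hs0 hsp hsmono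
    obtain ⟨β, hβrep, hβprop⟩ :=
      FrechetAux.exists_reparam_of_seq hm t b hb0 hbm hbstep ht0 htq htmono
    have hamono := FrechetAux.mono_of_step hastep
    have hbmono := FrechetAux.mono_of_step hbstep
    set M := (Finset.range (m + 1)).sup' Finset.nonempty_range_add_one
      (fun l => dist ((fun i => f (s i)) (a l)) ((fun j => g (t j)) (b l))) with hMdef
    have key : ∀ r : I, dist (f (α r)) (g (β r)) ≤ ε*B/2 + M + ε*B/2 := by
      intro r
      have hl : FrechetAux.idx m r < m := FrechetAux.idx_lt hm r
      set l := FrechetAux.idx m r with hldef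
      obtain ⟨h1, h2⟩ := hαprop r
      obtain ⟨h3, h4⟩ := hβprop r
      have hfa : dist (f (α r)) (f (s (a l))) ≤ ε*B/2 := by
        rcases hastep l hl with he | he
        · rw [he] at h2
          have heq : α r = s (a l) := Subtype.coe_injective (le_antisymm h2 h1)
          rw [heq, dist_self]
          positivity
        · have hap : a l < p := by
            have := hamono (l+1) m (by omega) le_rfl
            omega
          rw [he] at h2
          exact (hdevf (a l) hap (α r) (Subtype.coe_le_coe.1 h1) (Subtype.coe_le_coe.1 h2)).1
      have hgb : dist (g (β r)) (g (t (b l))) ≤ ε*B/2 := by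
        rcases hbstep l hl with he | he
        · rw [he] at h4
          have heq : β r = t (b l) := Subtype.coe_injective (le_antisymm h4 h3)
          rw [heq, dist_self]
          positivity
        · have hbq : b l < q := by
            have := hbmono (l+1) m (by omega) le_rfl
            omega
          rw [he] at h4
          exact (hdevg (b l) hbq (β r) (Subtype.coe_le_coe.1 h3) (Subtype.coe_le_coe.1 h4)).1
      have hM : dist (f (s (a l))) (g (t (b l))) ≤ M := by
        have hmem : l ∈ Finset.range (m+1) := Finset.mem_range.2 (by omega)
        exact Finset.le_sup'
          (fun l => dist ((fun i => f (s i)) (a l)) ((fun j => g (t j)) (b l))) hmem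
      calc dist (f (α r)) (g (β r))
          ≤ dist (f (α r)) (f (s (a l))) + dist (f (s (a l))) (g (t (b l)))
            + dist (g (t (b l))) (g (β r)) := dist_triangle4 _ _ _ _
        _ ≤ ε*B/2 + M + ε*B/2 := by
            rw [dist_comm (g (t (b l)))]
            linarith
    have hDle : frechetDist f g ≤ ε*B/2 + M + ε*B/2 := by
      have hd : frechetDist f g ≤ ⨆ r : I, dist (f (α r)) (g (β r)) := by
        rw [hD_def]
        exact csInf_le hFbdd ⟨α, β, hαrep, hβrep, rfl⟩
      exact hd.trans (ciSup_le key)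
    nlinarith [hεD, hDle]
  · -- upper bound
    have hup2 : ∀ d ∈ FSet,
        discreteFrechet p q (fun i => f (s i)) (fun j => g (t j)) ≤ d + ε * B := by
      rintro d ⟨α, β, hαrep, hβrep, rfl⟩
      obtain ⟨R, hRmono, hR0, hRval⟩ := FrechetAux.exists_reparam_points hαrep p s hs0 sMono
      obtain ⟨P, hPmono, hP0, hPval⟩ := FrechetAux.exists_reparam_points hβrep q t ht0 tMono
      obtain ⟨a, b, hcpl, hprop⟩ :=
        FrechetAux.exists_good_coupling p q R P hRmono hPmono hR0 hP0
      have hbddsup : BddAbove (Set.range fun r : I => dist (f (α r)) (g (β r))) := by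
        have hcont : Continuous fun r : I => dist (f (α r)) (g (β r)) :=
          (hf.comp hαrep.1).dist (hg.comp hβrep.1)
        exact (isCompact_range hcont).bddAbove
      have hmemD : (Finset.range (p + q + 1)).sup' Finset.nonempty_range_add_one
          (fun l => dist ((fun i => f (s i)) (a l)) ((fun j => g (t j)) (b l))) ∈ DSet :=
        ⟨p + q, a, b, hcpl, rfl⟩
      have hle : (Finset.range (p + q + 1)).sup' Finset.nonempty_range_add_one
          (fun l => dist ((fun i => f (s i)) (a l)) ((fun j => g (t j)) (b l)))
          ≤ (⨆ r : I, dist (f (α r)) (g (β r))) + ε * B := by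
        apply Finset.sup'_le
        intro l hlmem
        have hlle : l ≤ p + q := by
          have := Finset.mem_range.1 hlmem
          omega
        obtain ⟨hap, hbq, r, hr1, hr2, hr3, hr4⟩ := hprop l hlle
        have hfa : dist (f (s (a l))) (f (α r)) ≤ ε*B/2 := by
          rcases lt_or_eq_of_le hap with h | h
          · have e1 : s (a l) ≤ α r := by
              rw [← hRval (a l) h.le]
              exact hαrep.2.1 hr1
            have e2 : α r ≤ s (a l + 1) := by
              rw [← hRval (a l + 1) h]
              exact hαrep.2.1 (hr3 h)
            rw [dist_comm]
            exact (hdevf (a l) h (α r) e1 e2).1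
          · have e1 : s (a l) ≤ α r := by
              rw [← hRval (a l) h.le]
              exact hαrep.2.1 hr1
            have e2 : α r ≤ s (a l) := by
              rw [h, hsp]
              exact le_one'
            have heq : f (s (a l)) = f (α r) := congrArg f (le_antisymm e1 e2)
            rw [← heq, dist_self]
            positivity
        have hgb : dist (g (β r)) (g (t (b l))) ≤ ε*B/2 := by
          rcases lt_or_eq_of_le hbq with h | h
          · have e1 : t (b l) ≤ β r := by
              rw [← hPval (b l) h.le]
              exact hβrep.2.1 hr2
            have e2 : β r ≤ t (b l + 1) := by
              rw [← hPval (b l + 1) h]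
              exact hβrep.2.1 (hr4 h)
            exact (hdevg (b l) h (β r) e1 e2).1
          · have e1 : t (b l) ≤ β r := by
              rw [← hPval (b l) h.le]
              exact hβrep.2.1 hr2
            have e2 : β r ≤ t (b l) := by
              rw [h, htq]
              exact le_one'
            have heq : g (β r) = g (t (b l)) := congrArg g (le_antisymm e2 e1)
            rw [heq, dist_self]
            positivity
        have hsup : dist (f (α r)) (g (β r)) ≤ ⨆ r : I, dist (f (α r)) (g (β r)) :=
          le_ciSup hbddsup r
        calc dist ((fun i => f (s i)) (a l)) ((fun j => g (t j)) (b l))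
            = dist (f (s (a l))) (g (t (b l))) := rfl
          _ ≤ dist (f (s (a l))) (f (α r)) + dist (f (α r)) (g (β r))
              + dist (g (β r)) (g (t (b l))) := dist_triangle4 _ _ _ _
          _ ≤ (⨆ r : I, dist (f (α r)) (g (β r))) + ε * B := by linarith
      calc discreteFrechet p q (fun i => f (s i)) (fun j => g (t j))
          ≤ _ := by rw [hDF_def]; exact csInf_le hDSbdd hmemD
        _ ≤ (⨆ r : I, dist (f (α r)) (g (β r))) + ε * B := hle
    have hup : discreteFrechet p q (fun i => f (s i)) (fun j => g (t j))
        ≤ frechetDist f g + ε * B := by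
      have h1 : discreteFrechet p q (fun i => f (s i)) (fun j => g (t j)) - ε * B
          ≤ sInf FSet := le_csInf hFne (fun d hd => by linarith [hup2 d hd])
      rw [hD_def]
      linarith
    nlinarith [hεD, hup]
end

section
/- Let X be a metric space, let f, g : [0,1] → X be continuous curves, let 0 < ε ≤ 1/3, and let B > 0 with B ≤ δ_F(f,g). Let 0 = s_0 ≤ s_1 ≤ … ≤ s_p = 1 and 0 = t_0 ≤ t_1 ≤ … ≤ t_q = 1, set u_i = f(s_i) and v_j = g(t_j), and suppose the subdivisions have deviation at most εB/2, i.e. for every i and every s ∈ [s_i, s_{i+1}], dist(f(s), f(s_i)) ≤ εB/2 and dist(f(s), f(s_{i+1})) ≤ εB/2, and likewise for g on each [t_j, t_{j+1}]. Let d' : X × X → ℝ satisfy |d'(x,y) − dist(x,y)| ≤ ε·dist(x,y) for all x, y ∈ X, and define δ'_dF(u,v) as the infimum over all couplings of max_{1≤l≤m} d'(u_{a_l}, v_{b_l}). Then |δ'_dF(u,v) − δ_F(f,g)| ≤ 3ε·δ_F(f,g). -/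
open unitInterval

/-! ### Auxiliary lemmas -/

lemma isReparam_id : IsReparam id := ⟨continuous_id, monotone_id, Function.surjective_id⟩

lemma IsReparam.apply_zero {α : I → I} (h : IsReparam α) : α 0 = 0 := by
  obtain ⟨r, hr⟩ := h.2.2 0
  refine le_antisymm ?_ (α 0).2.1
  calc α 0 ≤ α r := h.2.1 r.2.1
  _ = 0 := hr

lemma IsReparam.apply_one {α : I → I} (h : IsReparam α) : α 1 = 1 := by
  obtain ⟨r, hr⟩ := h.2.2 1
  refine le_antisymm (α 1).2.2 ?_
  calc (1:I) = α r := hr.symm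
  _ ≤ α 1 := h.2.1 r.2.2
noncomputable def plFun (m : ℕ) (c : ℕ → ℝ) (x : ℝ) : ℝ :=
  ∑ l ∈ Finset.range m, (c (l+1) - c l) * (min 1 (max 0 (m * x - l)))

lemma plFun_continuous (m : ℕ) (c : ℕ → ℝ) : Continuous (plFun m c) := by
  unfold plFun
  exact continuous_finset_sum _ fun l _ => by fun_prop

lemma plFun_mono (m : ℕ) (c : ℕ → ℝ) (hc : ∀ l < m, c l ≤ c (l+1)) :
    Monotone (plFun m c) := by
  intro x y hxy
  unfold plFun
  refine Finset.sum_le_sum fun l hl => ?_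
  have h0 : 0 ≤ c (l+1) - c l := by
    have := hc l (Finset.mem_range.1 hl); linarith
  refine mul_le_mul_of_nonneg_left ?_ h0
  have : (m:ℝ) * x ≤ m * y := mul_le_mul_of_nonneg_left hxy (by positivity)
  exact min_le_min le_rfl (max_le_max le_rfl (by linarith))

lemma plFun_eval (m : ℕ) (c : ℕ → ℝ) (hm : 0 < m) (k : ℕ) (hk : k ≤ m) :
    plFun m c ((k:ℝ) / m) = c k - c 0 := by
  unfold plFun
  have hm' : (m:ℝ) ≠ 0 := Nat.cast_ne_zero.2 hm.ne'
  have h1 : ∀ l ∈ Finset.range m, (c (l+1) - c l) * (min 1 (max 0 (m * ((k:ℝ)/m) - l)))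
      = if l < k then c (l+1) - c l else 0 := by
    intro l _
    rw [mul_div_cancel₀ _ hm']
    by_cases h : l < k
    · have : (1:ℝ) ≤ (k:ℝ) - l := by
        have : (l:ℝ) + 1 ≤ k := by exact_mod_cast h
        linarith
      rw [if_pos h, max_eq_right (by linarith), min_eq_left (by linarith), mul_one]
    · have : (k:ℝ) - l ≤ 0 := by
        have : (k:ℝ) ≤ l := by exact_mod_cast Nat.le_of_not_lt h
        linarith
      rw [if_neg h, max_eq_left (by linarith), min_eq_right (by linarith), mul_zero]
  rw [Finset.sum_congr rfl h1]
  rw [← Finset.sum_subset (Finset.range_subset_range.2 hk) (fun x _ hx => if_neg (by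
    simp only [Finset.mem_range] at hx; omega))]
  rw [Finset.sum_congr rfl (fun l hl => if_pos (Finset.mem_range.1 hl))]
  exact Finset.sum_range_sub c k

lemma steps_mono {m : ℕ} {a : ℕ → ℕ} (h : ∀ l < m, a (l+1) = a l ∨ a (l+1) = a l + 1) :
    ∀ {j k : ℕ}, j ≤ k → k ≤ m → a j ≤ a k := by
  intro j k hjk hkm
  induction k with
  | zero => simp_all
  | succ n ih =>
    rcases Nat.lt_or_ge j (n+1) with hj | hj
    · have h1 : a j ≤ a n := ih (by omega) (by omega)
      have h2 := h n (by omega)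
      omega
    · have : j = n + 1 := by omega
      subst this; exact le_rfl

/-- build the reparametrization from one side of a coupling -/
lemma reparam_of_steps (m : ℕ) (hm : 0 < m) (p : ℕ) (s : ℕ → I) (a : ℕ → ℕ)
    (ha0 : a 0 = 0) (ham : a m = p)
    (hstep : ∀ l < m, a (l + 1) = a l ∨ a (l + 1) = a l + 1)
    (hs0 : s 0 = 0) (hsp : s p = 1) (hsmono : ∀ i < p, s i ≤ s (i + 1)) :
    ∃ α : I → I, IsReparam α ∧
      ∀ l < m, ∀ r : I, (l:ℝ) ≤ m * r → (m:ℝ) * r ≤ l + 1 →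
        s (a l) ≤ α r ∧ α r ≤ s (a (l+1)) := by
  classical
  set c : ℕ → ℝ := fun l => ((s (a (min l m)) : ℝ)) with hc
  have hmin : ∀ l ≤ m, c l = ((s (a l) : ℝ)) := fun l hl => by simp [hc, min_eq_left hl]
  have hcstep : ∀ l < m, c l ≤ c (l+1) := by
    intro l hl
    rw [hmin l hl.le, hmin (l+1) hl]
    rcases hstep l hl with h | h
    · rw [h]
    · rw [h]
      have hap : a l < p := by
        have : a (l+1) ≤ a m := steps_mono hstep hl le_rfl
        omega
      exact_mod_cast hsmono (a l) hap
  have hc0 : c 0 = 0 := by rw [hmin 0 (Nat.zero_le m), ha0, hs0]; rfl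
  have hcm : c m = 1 := by rw [hmin m le_rfl, ham, hsp]; rfl
  have hmR : (0:ℝ) < m := by exact_mod_cast hm
  have h0 : plFun m c 0 = 0 := by
    have := plFun_eval m c hm 0 (Nat.zero_le m)
    simpa [hc0] using this
  have h1 : plFun m c 1 = 1 := by
    have := plFun_eval m c hm m le_rfl
    rw [div_self hmR.ne'] at this
    rw [this, hcm, hc0, sub_zero]
  have hmono := plFun_mono m c hcstep
  have hmem : ∀ r : I, plFun m c r ∈ Set.Icc (0:ℝ) 1 := by
    intro r
    constructor
    · rw [← h0]; exact hmono r.2.1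
    · rw [← h1]; exact hmono r.2.2
  refine ⟨fun r => ⟨plFun m c r, hmem r⟩, ⟨?_, ?_, ?_⟩, ?_⟩
  · exact ((plFun_continuous m c).comp continuous_subtype_val).subtype_mk _
  · intro r r' hr
    exact Subtype.mk_le_mk.2 (hmono hr)
  · intro y
    have hsub := intermediate_value_Icc (zero_le_one (α := ℝ)) (plFun_continuous m c).continuousOn
    have : (y:ℝ) ∈ Set.Icc (plFun m c 0) (plFun m c 1) := by rw [h0, h1]; exact y.2
    obtain ⟨x, hx, hxy⟩ := hsub this
    exact ⟨⟨x, hx⟩, Subtype.ext hxy⟩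
  · intro l hl r hr1 hr2
    have e1 : plFun m c ((l:ℝ)/m) = c l := by
      rw [plFun_eval m c hm l hl.le, hc0, sub_zero]
    have e2 : plFun m c (((l+1:ℕ):ℝ)/m) = c (l+1) := by
      rw [plFun_eval m c hm (l+1) hl, hc0, sub_zero]
    have b1 : c l ≤ plFun m c r := by
      rw [← e1]
      exact hmono (by rw [div_le_iff₀ hmR]; linarith)
    have b2 : plFun m c r ≤ c (l+1) := by
      rw [← e2]
      refine hmono ?_
      rw [le_div_iff₀ hmR]
      push_cast
      linarith
    constructor
    · exact Subtype.coe_le_coe.1 (by rw [← hmin l hl.le]; exact b1)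
    · exact Subtype.coe_le_coe.1 (by rw [← hmin (l+1) hl]; exact b2)

lemma coupling_sup_bound {X : Type*} [MetricSpace X] (f g : I → X) (η : ℝ) (hη : 0 ≤ η)
    (p q : ℕ) (s t : ℕ → I)
    (hs0 : s 0 = 0) (hsp : s p = 1) (hsmono : ∀ i < p, s i ≤ s (i + 1))
    (ht0 : t 0 = 0) (htq : t q = 1) (htmono : ∀ j < q, t j ≤ t (j + 1))
    (hdevf : ∀ i < p, ∀ x : I, s i ≤ x → x ≤ s (i + 1) →
      dist (f x) (f (s i)) ≤ η ∧ dist (f x) (f (s (i + 1))) ≤ η)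
    (hdevg : ∀ j < q, ∀ x : I, t j ≤ x → x ≤ t (j + 1) →
      dist (g x) (g (t j)) ≤ η ∧ dist (g x) (g (t (j + 1))) ≤ η)
    (m : ℕ) (hm : 0 < m) (a b : ℕ → ℕ) (hab : IsCoupling p q m a b) :
    ∃ α β : I → I, IsReparam α ∧ IsReparam β ∧
      (⨆ r : I, dist (f (α r)) (g (β r))) ≤
        (Finset.range (m+1)).sup' Finset.nonempty_range_add_one
          (fun l => dist (f (s (a l))) (g (t (b l)))) + 2*η := by
  obtain ⟨ha0, hb0, ham, hbm, hastep, hbstep⟩ := hab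
  obtain ⟨α, hα, hαprop⟩ := reparam_of_steps m hm p s a ha0 ham hastep hs0 hsp hsmono
  obtain ⟨β, hβ, hβprop⟩ := reparam_of_steps m hm q t b hb0 hbm hbstep ht0 htq htmono
  refine ⟨α, β, hα, hβ, ciSup_le fun r => ?_⟩
  set l : ℕ := min (⌊(m:ℝ) * r⌋₊) (m-1) with hldef
  have hlm : l < m := by omega
  have hmR : (0:ℝ) < m := by exact_mod_cast hm
  have hr0 : (0:ℝ) ≤ (m:ℝ) * r := mul_nonneg hmR.le r.2.1
  have hl1 : (l:ℝ) ≤ m * r :=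
    le_trans (Nat.cast_le.2 (min_le_left _ _)) (Nat.floor_le hr0)
  have hl2 : (m:ℝ) * r ≤ l + 1 := by
    rcases le_or_gt (⌊(m:ℝ) * r⌋₊) (m-1) with h | h
    · rw [hldef, min_eq_left h]
      exact (Nat.lt_floor_add_one _).le
    · rw [hldef, min_eq_right h.le]
      have hcast : ((m-1:ℕ):ℝ) = (m:ℝ) - 1 := by
        rw [Nat.cast_sub hm]; norm_num
      have : (m:ℝ) * r ≤ m * 1 := mul_le_mul_of_nonneg_left r.2.2 hmR.le
      rw [hcast]; linarith
  have hfa := hαprop l hlm r hl1 hl2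
  have hgb := hβprop l hlm r hl1 hl2
  have hamle : a (l+1) ≤ p := ham ▸ steps_mono hastep hlm le_rfl
  have hbmle : b (l+1) ≤ q := hbm ▸ steps_mono hbstep hlm le_rfl
  have claimA : dist (f (α r)) (f (s (a l))) ≤ η := by
    rcases hastep l hlm with h | h
    · have : α r = s (a l) := le_antisymm (by rw [← h]; exact hfa.2) hfa.1
      rw [this, dist_self]; exact hη
    · have hap : a l < p := by omega
      exact (hdevf (a l) hap (α r) hfa.1 (by rw [← h]; exact hfa.2)).1
  have claimB : dist (g (β r)) (g (t (b l))) ≤ η := by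
    rcases hbstep l hlm with h | h
    · have : β r = t (b l) := le_antisymm (by rw [← h]; exact hgb.2) hgb.1
      rw [this, dist_self]; exact hη
    · have hbp : b l < q := by omega
      exact (hdevg (b l) hbp (β r) hgb.1 (by rw [← h]; exact hgb.2)).1
  have hmid : dist (f (s (a l))) (g (t (b l))) ≤
      (Finset.range (m+1)).sup' Finset.nonempty_range_add_one
        (fun l => dist (f (s (a l))) (g (t (b l)))) :=
    Finset.le_sup' (fun l => dist (f (s (a l))) (g (t (b l))))
      (Finset.mem_range.2 (Nat.lt_succ_of_lt hlm))
  have hgb' : dist (g (t (b l))) (g (β r)) ≤ η := by rw [dist_comm]; exact claimB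
  have := dist_triangle4 (f (α r)) (f (s (a l))) (g (t (b l))) (g (β r))
  linarith
noncomputable def ιI : ℝ → I := Set.projIcc 0 1 zero_le_one

lemma ιI_mono : Monotone ιI := Set.monotone_projIcc zero_le_one
lemma ιI_cont : Continuous ιI := continuous_projIcc
lemma ιI_zero : ιI 0 = 0 := by simp [ιI]
lemma ιI_one : ιI 1 = 1 := by simp [ιI]

/-- the first time `α` reaches level `s i` (extended by `1` above index `p`). -/
noncomputable def timeOf (α : I → I) (s : ℕ → I) (p : ℕ) (i : ℕ) : ℝ :=
  if i ≤ p then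
    sInf (Set.Icc (0:ℝ) 1 ∩ {x | (s i : ℝ) ≤ ((α (ιI x) : ℝ))})
  else 1

section timeOf
variable {α : I → I} {s : ℕ → I} {p : ℕ}

lemma timeOf_set_closed (hα : IsReparam α) (i : ℕ) :
    IsClosed (Set.Icc (0:ℝ) 1 ∩ {x | (s i : ℝ) ≤ ((α (ιI x) : ℝ))}) :=
  isClosed_Icc.inter (isClosed_le continuous_const
    (continuous_subtype_val.comp (hα.1.comp ιI_cont)))

lemma timeOf_set_nonempty (hα : IsReparam α) (i : ℕ) :
    (Set.Icc (0:ℝ) 1 ∩ {x | (s i : ℝ) ≤ ((α (ιI x) : ℝ))}).Nonempty := by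
  refine ⟨1, Set.mem_Icc.2 ⟨zero_le_one, le_rfl⟩, ?_⟩
  show (s i : ℝ) ≤ ((α (ιI 1) : ℝ))
  rw [ιI_one, hα.apply_one]
  exact (s i).2.2

lemma timeOf_set_bdd (i : ℕ) :
    BddBelow (Set.Icc (0:ℝ) 1 ∩ {x | (s i : ℝ) ≤ ((α (ιI x) : ℝ))}) :=
  ⟨0, fun x hx => hx.1.1⟩

lemma timeOf_mem (hα : IsReparam α) (i : ℕ) : timeOf α s p i ∈ Set.Icc (0:ℝ) 1 := by
  unfold timeOf
  split
  · exact ((timeOf_set_closed hα i).csInf_mem (timeOf_set_nonempty hα i)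
      (timeOf_set_bdd i)).1
  · exact Set.mem_Icc.2 ⟨zero_le_one, le_rfl⟩

lemma timeOf_spec (hα : IsReparam α) {i : ℕ} (hi : i ≤ p) :
    (s i : ℝ) ≤ ((α (ιI (timeOf α s p i)) : ℝ)) := by
  unfold timeOf
  rw [if_pos hi]
  exact ((timeOf_set_closed hα i).csInf_mem (timeOf_set_nonempty hα i)
      (timeOf_set_bdd i)).2

lemma timeOf_eval (hα : IsReparam α) {i : ℕ} (hi : i ≤ p) :
    α (ιI (timeOf α s p i)) = s i := by
  set T := timeOf α s p i with hT
  have hmemIcc := timeOf_mem (s := s) hα i (p := p)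
  rw [← hT] at hmemIcc
  refine Subtype.ext ?_
  refine le_antisymm ?_ (timeOf_spec hα hi)
  by_contra hlt
  push_neg at hlt
  -- IVT on [0, T]
  have hcont : ContinuousOn (fun x : ℝ => ((α (ιI x) : ℝ))) (Set.Icc 0 T) :=
    (continuous_subtype_val.comp (hα.1.comp ιI_cont)).continuousOn
  have h0 : ((α (ιI 0) : ℝ)) = 0 := by rw [ιI_zero, hα.apply_zero]; rfl
  have hmem : (s i : ℝ) ∈ Set.Icc ((α (ιI 0) : ℝ)) ((α (ιI T) : ℝ)) := by
    rw [h0]; exact ⟨(s i).2.1, hlt.le⟩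
  obtain ⟨x, hx, hxe⟩ := intermediate_value_Icc hmemIcc.1 hcont hmem
  have hxS : x ∈ Set.Icc (0:ℝ) 1 ∩ {x | (s i : ℝ) ≤ ((α (ιI x) : ℝ))} :=
    ⟨⟨hx.1, hx.2.trans hmemIcc.2⟩, le_of_eq hxe.symm⟩
  have : T ≤ x := by
    rw [hT]
    unfold timeOf
    rw [if_pos hi]
    exact csInf_le (timeOf_set_bdd i) hxS
  have hxT : x = T := le_antisymm hx.2 this
  rw [hxT] at hxe
  exact absurd hxe (ne_of_gt hlt)

lemma timeOf_mono (hα : IsReparam α) (hsmono : ∀ i < p, s i ≤ s (i + 1)) :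
    Monotone (timeOf α s p) := by
  refine monotone_nat_of_le_succ fun i => ?_
  by_cases h1 : i + 1 ≤ p
  · unfold timeOf
    rw [if_pos h1, if_pos (by omega)]
    refine csInf_le_csInf (timeOf_set_bdd i) (timeOf_set_nonempty hα (i+1)) ?_
    intro x hx
    refine ⟨hx.1, ?_⟩
    have hss : (s i : ℝ) ≤ (s (i+1) : ℝ) := hsmono i (by omega)
    exact hss.trans hx.2
  · by_cases h2 : i ≤ p
    · unfold timeOf
      rw [if_pos h2, if_neg h1]
      have := ((timeOf_set_closed hα i).csInf_mem (timeOf_set_nonempty hα i)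
        (timeOf_set_bdd (s := s) (α := α) i)).1.2
      exact this
    · unfold timeOf; rw [if_neg h1, if_neg h2]

lemma timeOf_zero (hα : IsReparam α) (hs0 : s 0 = 0) : timeOf α s p 0 = 0 := by
  unfold timeOf
  rw [if_pos (Nat.zero_le p)]
  refine le_antisymm (csInf_le (timeOf_set_bdd 0) ?_) (le_csInf (timeOf_set_nonempty hα 0)
    fun x hx => hx.1.1)
  refine ⟨Set.mem_Icc.2 ⟨le_rfl, zero_le_one⟩, ?_⟩
  show (s 0 : ℝ) ≤ _
  rw [hs0]
  exact (α (ιI 0)).2.1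

lemma timeOf_top {i : ℕ} (hi : p < i) : timeOf α s p i = 1 := by
  unfold timeOf; rw [if_neg (by omega)]

end timeOf

open scoped Classical in
noncomputable def walk (R P : ℕ → ℝ) (p q : ℕ) : ℕ → ℕ × ℕ
  | 0 => (0, 0)
  | l+1 =>
    if (walk R P p q l).1 < p ∧
        (q ≤ (walk R P p q l).2 ∨ R ((walk R P p q l).1+1) ≤ P ((walk R P p q l).2+1)) then
      ((walk R P p q l).1 + 1, (walk R P p q l).2)
    else
      ((walk R P p q l).1, (walk R P p q l).2 + 1)

lemma walk_step (R P : ℕ → ℝ) (p q : ℕ) (l : ℕ) :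
    (walk R P p q (l+1) = ((walk R P p q l).1 + 1, (walk R P p q l).2)) ∨
    (walk R P p q (l+1) = ((walk R P p q l).1, (walk R P p q l).2 + 1)) := by
  rw [walk]
  split
  · exact Or.inl rfl
  · exact Or.inr rfl

lemma walk_inv (R P : ℕ → ℝ) (p q : ℕ)
    (hR : Monotone R) (hP : Monotone P)
    (hR0 : R 0 = 0) (hP0 : P 0 = 0)
    (hRub : ∀ i, R i ≤ 1) (hPub : ∀ j, P j ≤ 1)
    (hRp : R (p+1) = 1) (hPq : P (q+1) = 1) :
    ∀ l ≤ p + q,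
      (walk R P p q l).1 + (walk R P p q l).2 = l ∧
      (walk R P p q l).1 ≤ p ∧ (walk R P p q l).2 ≤ q ∧
      R (walk R P p q l).1 ≤ P ((walk R P p q l).2 + 1) ∧
      P (walk R P p q l).2 ≤ R ((walk R P p q l).1 + 1) := by
  intro l
  induction l with
  | zero =>
    intro _
    refine ⟨rfl, Nat.zero_le _, Nat.zero_le _, ?_, ?_⟩
    · show R 0 ≤ P 1
      rw [hR0, ← hP0]
      exact hP (Nat.zero_le 1)
    · show P 0 ≤ R 1
      rw [hP0, ← hR0]
      exact hR (Nat.zero_le 1)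
  | succ n ih =>
    intro hn
    obtain ⟨hsum, hap, hbq, hinv1, hinv2⟩ := ih (by omega)
    set a := (walk R P p q n).1 with ha
    set b := (walk R P p q n).2 with hb
    rw [walk]
    split
    · rename_i hcond
      obtain ⟨hlt, hor⟩ := hcond
      refine ⟨by omega, by omega, hbq, ?_, ?_⟩
      · show R (a + 1) ≤ P (b + 1)
        rcases hor with h | h
        · have hbq' : b = q := by omega
          rw [hbq', hPq]
          exact hRub _
        · exact h
      · show P b ≤ R (a + 1 + 1)
        exact hinv2.trans (hR (by omega))
    · rename_i hcond
      push_neg at hcond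
      have hbq' : b + 1 ≤ q := by
        by_cases hcase : a < p
        · exact (hcond hcase).1
        · omega
      refine ⟨by omega, hap, hbq', ?_, ?_⟩
      · show R a ≤ P (b + 1 + 1)
        exact hinv1.trans (hP (by omega))
      · show P (b + 1) ≤ R (a + 1)
        by_cases hcase : a < p
        · exact (hcond hcase).2.le
        · have : a = p := by omega
          rw [this, hRp]
          exact hPub _

lemma near_claim {X : Type*} [MetricSpace X] (f : I → X) (η : ℝ) (hη : 0 ≤ η)
    (p : ℕ) (s : ℕ → I) (hsp : s p = 1)
    (hdevf : ∀ i < p, ∀ x : I, s i ≤ x → x ≤ s (i + 1) →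
      dist (f x) (f (s i)) ≤ η ∧ dist (f x) (f (s (i + 1))) ≤ η)
    (α : I → I) (hα : IsReparam α)
    (a : ℕ) (ha : a ≤ p) (w : ℝ)
    (h1 : timeOf α s p a ≤ w) (h2 : w ≤ timeOf α s p (a+1)) :
    dist (f (α (ιI w))) (f (s a)) ≤ η := by
  have hs1 : s a ≤ α (ιI w) := by
    calc s a = α (ιI (timeOf α s p a)) := (timeOf_eval hα ha).symm
    _ ≤ α (ιI w) := hα.2.1 (ιI_mono h1)
  rcases eq_or_lt_of_le ha with heq | hlt
  · have : α (ιI w) = s a := by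
      refine le_antisymm ?_ hs1
      rw [heq, hsp]
      exact (α (ιI w)).2.2
    rw [this, dist_self]; exact hη
  · have h2' : α (ιI w) ≤ s (a+1) := by
      calc α (ιI w) ≤ α (ιI (timeOf α s p (a+1))) := hα.2.1 (ιI_mono h2)
      _ = s (a+1) := timeOf_eval hα hlt
    exact (hdevf a hlt _ hs1 h2').1


lemma exists_coupling_of_reparams {X : Type*} [MetricSpace X] (f g : I → X)
    (hf : Continuous f) (hg : Continuous g) (η : ℝ) (hη : 0 ≤ η)
    (p q : ℕ) (s t : ℕ → I)
    (hs0 : s 0 = 0) (hsp : s p = 1) (hsmono : ∀ i < p, s i ≤ s (i + 1))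
    (ht0 : t 0 = 0) (htq : t q = 1) (htmono : ∀ j < q, t j ≤ t (j + 1))
    (hdevf : ∀ i < p, ∀ x : I, s i ≤ x → x ≤ s (i + 1) →
      dist (f x) (f (s i)) ≤ η ∧ dist (f x) (f (s (i + 1))) ≤ η)
    (hdevg : ∀ j < q, ∀ x : I, t j ≤ x → x ≤ t (j + 1) →
      dist (g x) (g (t j)) ≤ η ∧ dist (g x) (g (t (j + 1))) ≤ η)
    (α β : I → I) (hα : IsReparam α) (hβ : IsReparam β) :
    ∃ m : ℕ, ∃ a b : ℕ → ℕ, IsCoupling p q m a b ∧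
      ∀ l ≤ m, dist (f (s (a l))) (g (t (b l))) ≤
        (⨆ r : I, dist (f (α r)) (g (β r))) + 2*η := by
  set R := timeOf α s p with hRdef
  set P := timeOf β t q with hPdef
  have hRmono : Monotone R := timeOf_mono hα hsmono
  have hPmono : Monotone P := timeOf_mono hβ htmono
  have inv := walk_inv R P p q hRmono hPmono (timeOf_zero hα hs0) (timeOf_zero hβ ht0)
    (fun i => (timeOf_mem hα i).2) (fun j => (timeOf_mem hβ j).2)
    (timeOf_top (Nat.lt_succ_self p)) (timeOf_top (Nat.lt_succ_self q))
  refine ⟨p+q, fun l => (walk R P p q l).1, fun l => (walk R P p q l).2,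
    ⟨rfl, rfl, ?_, ?_, ?_, ?_⟩, ?_⟩
  · show (walk R P p q (p+q)).1 = p
    have := inv (p+q) le_rfl; omega
  · show (walk R P p q (p+q)).2 = q
    have := inv (p+q) le_rfl; omega
  · intro l _
    show (walk R P p q (l+1)).1 = (walk R P p q l).1 ∨ (walk R P p q (l+1)).1 = (walk R P p q l).1 + 1
    rcases walk_step R P p q l with h | h <;> rw [h]
    · right; rfl
    · left; rfl
  · intro l _
    show (walk R P p q (l+1)).2 = (walk R P p q l).2 ∨ (walk R P p q (l+1)).2 = (walk R P p q l).2 + 1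
    rcases walk_step R P p q l with h | h <;> rw [h]
    · left; rfl
    · right; rfl
  · intro l hl
    show dist (f (s (walk R P p q l).1)) (g (t (walk R P p q l).2)) ≤ _
    obtain ⟨hsum, hap, hbq, hinv1, hinv2⟩ := inv l hl
    set a := (walk R P p q l).1 with hadef
    set b := (walk R P p q l).2 with hbdef
    set w : ℝ := max (R a) (P b) with hwdef
    have claimA : dist (f (α (ιI w))) (f (s a)) ≤ η :=
      near_claim f η hη p s hsp hdevf α hα a hap w (le_max_left _ _)
        (max_le (hRmono (Nat.le_succ a)) hinv2)
    have claimB : dist (g (β (ιI w))) (g (t b)) ≤ η :=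
      near_claim g η hη q t htq hdevg β hβ b hbq w (le_max_right _ _)
        (max_le hinv1 (hPmono (Nat.le_succ b)))
    have hbdd : BddAbove (Set.range fun r : I => dist (f (α r)) (g (β r))) :=
      (isCompact_range (((hf.comp hα.1)).dist (hg.comp hβ.1))).bddAbove
    have hmid : dist (f (α (ιI w))) (g (β (ιI w))) ≤ ⨆ r : I, dist (f (α r)) (g (β r)) :=
      le_ciSup hbdd (ιI w)
    have htri := dist_triangle4 (f (s a)) (f (α (ιI w))) (g (β (ιI w))) (g (t b))
    have e1 : dist (f (s a)) (f (α (ιI w))) = dist (f (α (ιI w))) (f (s a)) := dist_comm _ _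
    linarith

theorem approx_discreteFrechet_approx
    {X : Type*} [MetricSpace X] (f g : I → X) (hf : Continuous f) (hg : Continuous g)
    (ε : ℝ) (hε : 0 < ε) (hε' : ε ≤ 1 / 3)
    (B : ℝ) (hB : 0 < B) (hBle : B ≤ frechetDist f g)
    (p q : ℕ) (s t : ℕ → I)
    (hs0 : s 0 = 0) (hsp : s p = 1) (hsmono : ∀ i < p, s i ≤ s (i + 1))
    (ht0 : t 0 = 0) (htq : t q = 1) (htmono : ∀ j < q, t j ≤ t (j + 1))
    (hdevf : ∀ i < p, ∀ x : I, s i ≤ x → x ≤ s (i + 1) →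
      dist (f x) (f (s i)) ≤ ε * B / 2 ∧ dist (f x) (f (s (i + 1))) ≤ ε * B / 2)
    (hdevg : ∀ j < q, ∀ x : I, t j ≤ x → x ≤ t (j + 1) →
      dist (g x) (g (t j)) ≤ ε * B / 2 ∧ dist (g x) (g (t (j + 1))) ≤ ε * B / 2)
    (d' : X → X → ℝ) (hd' : ∀ x y : X, |d' x y - dist x y| ≤ ε * dist x y) :
    |discreteFrechetWith d' p q (fun i => f (s i)) (fun j => g (t j)) - frechetDist f g| ≤
      3 * ε * frechetDist f g := by
  have hδB : 0 < frechetDist f g := lt_of_lt_of_le hB hBle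
  have hε1 : ε < 1 := by linarith
  have hη : 0 ≤ ε * B / 2 := by positivity
  have hp : 0 < p := by
    rcases Nat.eq_zero_or_pos p with h | h
    · exfalso
      rw [h, hs0] at hsp
      exact zero_ne_one (congrArg Subtype.val hsp)
    · exact h
  have hd'nonneg : ∀ x y : X, 0 ≤ d' x y := by
    intro x y
    have h1 := (abs_le.1 (hd' x y)).1
    have h2 := dist_nonneg (x := x) (y := y)
    nlinarith
  -- the two sInf index sets
  have hFSbdd : BddBelow { d | ∃ α β : I → I, IsReparam α ∧ IsReparam β ∧
      d = ⨆ r : I, dist (f (α r)) (g (β r)) } := by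
    refine ⟨0, ?_⟩
    rintro d ⟨α, β, hα, hβ, rfl⟩
    exact Real.iSup_nonneg fun r => dist_nonneg
  have hFSne : { d | ∃ α β : I → I, IsReparam α ∧ IsReparam β ∧
      d = ⨆ r : I, dist (f (α r)) (g (β r)) }.Nonempty :=
    ⟨_, id, id, isReparam_id, isReparam_id, rfl⟩
  have hDSbdd : BddBelow { c | ∃ m : ℕ, ∃ a b : ℕ → ℕ, IsCoupling p q m a b ∧
      c = (Finset.range (m + 1)).sup' Finset.nonempty_range_add_one
        (fun l => d' (f (s (a l))) (g (t (b l)))) } := by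
    refine ⟨0, ?_⟩
    rintro c ⟨m, a, b, hab, rfl⟩
    exact le_trans (hd'nonneg _ _)
      (Finset.le_sup' (fun l => d' (f (s (a l))) (g (t (b l))))
        (Finset.mem_range.2 (Nat.succ_pos m)))
  have hDSne : { c | ∃ m : ℕ, ∃ a b : ℕ → ℕ, IsCoupling p q m a b ∧
      c = (Finset.range (m + 1)).sup' Finset.nonempty_range_add_one
        (fun l => d' (f (s (a l))) (g (t (b l)))) }.Nonempty := by
    refine ⟨_, p + q, fun l => min l p, fun l => l - min l p, ?_, rfl⟩
    exact ⟨show min 0 p = 0 by omega, show 0 - min 0 p = 0 by omega,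
      show min (p+q) p = p by omega, show (p+q) - min (p+q) p = q by omega,
      fun l _ => show min (l+1) p = min l p ∨ min (l+1) p = min l p + 1 by omega,
      fun l _ => show (l+1) - min (l+1) p = l - min l p ∨
        (l+1) - min (l+1) p = (l - min l p) + 1 by omega⟩
  -- upper bound : D' ≤ (1+ε)(δ + εB)
  have hub : discreteFrechetWith d' p q (fun i => f (s i)) (fun j => g (t j)) ≤
      (1 + ε) * (frechetDist f g + ε * B) := by
    have step : ∀ C ∈ { d | ∃ α β : I → I, IsReparam α ∧ IsReparam β ∧
        d = ⨆ r : I, dist (f (α r)) (g (β r)) },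
        discreteFrechetWith d' p q (fun i => f (s i)) (fun j => g (t j)) ≤
          (1 + ε) * (C + ε * B) := by
      rintro C ⟨α, β, hα, hβ, rfl⟩
      obtain ⟨m, a, b, hab, hbound⟩ := exists_coupling_of_reparams f g hf hg (ε * B / 2) hη
        p q s t hs0 hsp hsmono ht0 htq htmono hdevf hdevg α β hα hβ
      have hC0 : (0:ℝ) ≤ ⨆ r : I, dist (f (α r)) (g (β r)) :=
        Real.iSup_nonneg fun r => dist_nonneg
      refine le_trans (csInf_le hDSbdd ⟨m, a, b, hab, rfl⟩) ?_
      refine Finset.sup'_le _ _ fun l hl => ?_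
      have hlm : l ≤ m := by
        have := Finset.mem_range.1 hl; omega
      have hld := hbound l hlm
      have h1 := (abs_le.1 (hd' (f (s (a l))) (g (t (b l))))).2
      have h2 : dist (f (s (a l))) (g (t (b l))) ≤
          (⨆ r : I, dist (f (α r)) (g (β r))) + ε * B := by
        have : (⨆ r : I, dist (f (α r)) (g (β r))) + 2 * (ε * B / 2) =
            (⨆ r : I, dist (f (α r)) (g (β r))) + ε * B := by ring
        rw [← this]; exact hld
      have h3 : (0:ℝ) ≤ dist (f (s (a l))) (g (t (b l))) := dist_nonneg
      nlinarith
    have h2 : (discreteFrechetWith d' p q (fun i => f (s i)) (fun j => g (t j))) / (1 + ε)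
        - ε * B ≤ frechetDist f g := by
      refine le_csInf hFSne fun C hC => ?_
      have := step C hC
      rw [sub_le_iff_le_add, div_le_iff₀ (by linarith : (0:ℝ) < 1 + ε)]
      nlinarith
    rw [sub_le_iff_le_add, div_le_iff₀ (by linarith : (0:ℝ) < 1 + ε)] at h2
    nlinarith
  -- lower bound : (1-ε)(δ - εB) ≤ D'
  have hlb : (1 - ε) * (frechetDist f g - ε * B) ≤
      discreteFrechetWith d' p q (fun i => f (s i)) (fun j => g (t j)) := by
    refine le_csInf hDSne ?_
    rintro c ⟨m, a, b, hab, rfl⟩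
    have hm : 0 < m := by
      rcases Nat.eq_zero_or_pos m with h | h
      · exfalso
        have h1 := hab.1
        have h2 := hab.2.2.1
        rw [h] at h2
        omega
      · exact h
    obtain ⟨α, β, hα, hβ, hsup⟩ := coupling_sup_bound f g (ε * B / 2) hη p q s t
      hs0 hsp hsmono ht0 htq htmono hdevf hdevg m hm a b hab
    have hδM : frechetDist f g ≤
        (Finset.range (m+1)).sup' Finset.nonempty_range_add_one
          (fun l => dist (f (s (a l))) (g (t (b l)))) + ε * B := by
      have h4 := le_trans (csInf_le hFSbdd ⟨α, β, hα, hβ, rfl⟩) hsup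
      have : (Finset.range (m+1)).sup' Finset.nonempty_range_add_one
            (fun l => dist (f (s (a l))) (g (t (b l)))) + 2 * (ε * B / 2) =
          (Finset.range (m+1)).sup' Finset.nonempty_range_add_one
            (fun l => dist (f (s (a l))) (g (t (b l)))) + ε * B := by ring
      rw [← this]; exact h4
    obtain ⟨l₀, hl₀mem, hl₀⟩ := Finset.exists_mem_eq_sup' (Finset.nonempty_range_add_one (n := m))
      (fun l => dist (f (s (a l))) (g (t (b l))))
    have h5 : (1 - ε) * ((Finset.range (m+1)).sup' Finset.nonempty_range_add_one
        (fun l => dist (f (s (a l))) (g (t (b l))))) ≤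
        (Finset.range (m+1)).sup' Finset.nonempty_range_add_one
          (fun l => d' (f (s (a l))) (g (t (b l)))) := by
      rw [hl₀]
      have h6 := (abs_le.1 (hd' (f (s (a l₀))) (g (t (b l₀))))).1
      have h7 : d' (f (s (a l₀))) (g (t (b l₀))) ≤
          (Finset.range (m+1)).sup' Finset.nonempty_range_add_one
            (fun l => d' (f (s (a l))) (g (t (b l)))) :=
        Finset.le_sup' (fun l => d' (f (s (a l))) (g (t (b l)))) hl₀mem
      nlinarith
    have h8 : (1 - ε) * (frechetDist f g - ε * B) ≤
        (1 - ε) * ((Finset.range (m+1)).sup' Finset.nonempty_range_add_one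
          (fun l => dist (f (s (a l))) (g (t (b l))))) := by
      refine mul_le_mul_of_nonneg_left ?_ (by linarith)
      linarith
    exact h8.trans h5
  -- combine
  have hεBδ : ε * B ≤ ε * frechetDist f g := by nlinarith
  rw [abs_le]
  constructor
  · nlinarith
  · nlinarith
end
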